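/- arXiv:2011.01093 — 6 statements merged into one kernel-verified Lean document; each statement's English description precedes it below -/
import Mathlib

section
/- For a square matrix A, T ≥ 0 and i ∈ ℕ, the identity (T^{i+1}/(i+1)!) Γ_{ω,i}(T) = ∫_0^T (σ^i / i!) e^{A(T-σ)} dσ holds, where Γ_{ω,i}(T) = Σ_{j=0}^∞ ((i+1)!/(i+1+j)!) A^j T^j. -/
open MeasureTheory Matrix

attribute [local instance] Matrix.linftyOpNormedAddCommGroup Matrix.linftyOpNormedSpace


lemma beta_nat' (T : ℝ) : ∀ i j : ℕ, ∫ x in (0:ℝ)..T, x ^ i * (T - x) ^ j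
    = ((i.factorial : ℝ) * j.factorial / (i + j + 1).factorial) * T ^ (i + j + 1) := by
  intro i
  induction i with
  | zero =>
    intro j
    simp only [pow_zero, one_mul]
    have h : (∫ x in (0:ℝ)..T, (T - x) ^ j) = ∫ x in (T - T)..(T - 0), x ^ j :=
      intervalIntegral.integral_comp_sub_left (fun x => x ^ j) T
    rw [h]
    simp only [sub_self, sub_zero, integral_pow]
    rw [Nat.factorial_succ]
    push_cast
    have : ((j:ℝ)+1) ≠ 0 := by positivity
    have : (j.factorial : ℝ) ≠ 0 := Nat.cast_ne_zero.mpr (Nat.factorial_ne_zero _)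
    field_simp
    ring
  | succ i ih =>
    intro j
    have hu : ∀ x ∈ Set.uIcc (0:ℝ) T, HasDerivAt (fun x : ℝ => x ^ (i+1))
        (((i:ℝ)+1) * x ^ i) x := by
      intro x _
      simpa using hasDerivAt_pow (i+1) x
    have hv : ∀ x ∈ Set.uIcc (0:ℝ) T, HasDerivAt (fun x : ℝ => -(T - x) ^ (j+1) / ((j:ℝ)+1))
        ((T - x) ^ j) x := by
      intro x _
      have h1 : HasDerivAt (fun x : ℝ => (T - x) ^ (j+1))
          ((((j:ℝ)+1) * (T - x) ^ j) * (-1)) x := by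
        have := (hasDerivAt_pow (j+1) (T - x)).comp x ((hasDerivAt_id x).const_sub T)
        simpa [Function.comp_def] using this
      have h2 := (h1.neg).div_const ((j:ℝ)+1)
      have hj : ((j:ℝ)+1) ≠ 0 := by positivity
      rw [show ((T - x) ^ j) = -((((j:ℝ)+1) * (T - x) ^ j) * (-1)) / ((j:ℝ)+1) by rw [eq_div_iff hj]; ring]
      exact h2
    have hparts := intervalIntegral.integral_mul_deriv_eq_deriv_mul hu hv
      (by apply Continuous.intervalIntegrable; continuity)
      (by apply Continuous.intervalIntegrable; continuity)
    rw [hparts]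
    have hsimp : (∫ x in (0:ℝ)..T, (((i:ℝ)+1) * x ^ i) * (-(T - x) ^ (j+1) / ((j:ℝ)+1)))
        = (-(((i:ℝ)+1) / ((j:ℝ)+1))) * ∫ x in (0:ℝ)..T, x ^ i * (T - x) ^ (j+1) := by
      rw [← intervalIntegral.integral_const_mul]
      congr 1; funext x; field_simp
    rw [hsimp, ih (j+1)]
    have hj : ((j:ℝ)+1) ≠ 0 := by positivity
    have hf1 : ((i + (j+1) + 1).factorial : ℝ) ≠ 0 := Nat.cast_ne_zero.mpr (Nat.factorial_ne_zero _)
    have he : i + 1 + j + 1 = i + (j+1) + 1 := by omega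
    have he2 : i + 1 + (j+1) = i + (j+1) + 1 := by omega
    rw [Nat.factorial_succ i, Nat.factorial_succ j]
    rw [show (i + 1 + j + 1) = i + (j+1) + 1 from he]
    push_cast
    simp only [sub_self, sub_zero, zero_pow (Nat.succ_ne_zero i), zero_pow (Nat.succ_ne_zero j)]
    field_simp
    ring

attribute [local instance] Matrix.linftyOpNormedRing Matrix.linftyOpNormedAlgebra

/-- `(T^{i+1}/(i+1)!) Γ_{ω,i}(T) = ∫_0^T (σ^i/i!) e^{A(T-σ)} dσ`. -/
theorem stmt4 {n : ℕ} (A : Matrix (Fin n) (Fin n) ℝ) (T : ℝ) (hT : 0 ≤ T) (i : ℕ) :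
    (T ^ (i + 1) / (i + 1).factorial : ℝ) •
        (∑' j : ℕ, (((i + 1).factorial : ℝ) / ((i + 1 + j).factorial) * T ^ j) • A ^ j) =
      ∫ σ in (0 : ℝ)..T, (σ ^ i / i.factorial : ℝ) • NormedSpace.exp ((T - σ) • A) := by
  have hfi : (i.factorial : ℝ) ≠ 0 := Nat.cast_ne_zero.mpr (Nat.factorial_ne_zero _)
  -- pointwise expansion of the exponential
  have key : ∀ σ : ℝ, (σ ^ i / i.factorial : ℝ) • NormedSpace.exp ((T - σ) • A)
      = ∑' j : ℕ, (σ ^ i / i.factorial * ((T - σ) ^ j / j.factorial)) • A ^ j := by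
    intro σ
    rw [NormedSpace.exp_eq_tsum (𝕂 := ℝ), ← tsum_const_smul'' (σ ^ i / (i.factorial : ℝ))]
    refine tsum_congr fun j => ?_
    rw [smul_pow, smul_smul, smul_smul]
    congr 1
    field_simp
  letI : ContinuousENorm (Matrix (Fin n) (Fin n) ℝ) := SeminormedAddGroup.toContinuousENorm
  -- integrability of each term
  have hint : ∀ j : ℕ, IntegrableOn
      (fun σ : ℝ => (σ ^ i / i.factorial * ((T - σ) ^ j / j.factorial)) • A ^ j)
      (Set.Ioc 0 T) volume := by
    intro j
    apply Continuous.integrableOn_Ioc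
    exact (by continuity : Continuous fun σ : ℝ =>
      (σ ^ i / i.factorial * ((T - σ) ^ j / j.factorial))).smul continuous_const
  -- summability of the integrals of norms
  have hsum : Summable fun j : ℕ => ∫ σ in Set.Ioc (0:ℝ) T,
      ‖(σ ^ i / i.factorial * ((T - σ) ^ j / j.factorial)) • A ^ j‖ := by
    have hmaj : Summable fun j : ℕ =>
        (T ^ (i + 1) / i.factorial) * ‖((j.factorial : ℝ)⁻¹) • (T • A) ^ j‖ :=
      (NormedSpace.norm_expSeries_summable' (T • A)).mul_left _
    refine Summable.of_nonneg_of_le (fun j => integral_nonneg fun σ => norm_nonneg _)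
      (fun j => ?_) hmaj
    have hC : ∀ σ ∈ Set.Ioc (0:ℝ) T,
        ‖‖(σ ^ i / i.factorial * ((T - σ) ^ j / j.factorial)) • A ^ j‖‖
          ≤ (T ^ i / i.factorial * (T ^ j / j.factorial)) * ‖A ^ j‖ := by
      intro σ hσ
      have h1 : 0 < σ := hσ.1
      have h2 : σ ≤ T := hσ.2
      rw [norm_norm, norm_smul, Real.norm_eq_abs, abs_mul, abs_div, abs_div, abs_pow,
        abs_pow, abs_of_pos h1, abs_of_nonneg (show (0:ℝ) ≤ T - σ by linarith),
        Nat.abs_cast, Nat.abs_cast]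
      have hts : (0:ℝ) ≤ T - σ := by linarith
      gcongr
      all_goals first
        | exact div_nonneg (pow_nonneg hts j) (Nat.cast_nonneg _)
        | linarith
    calc (∫ σ in Set.Ioc (0:ℝ) T,
          ‖(σ ^ i / i.factorial * ((T - σ) ^ j / j.factorial)) • A ^ j‖)
        ≤ ‖∫ σ in Set.Ioc (0:ℝ) T,
          ‖(σ ^ i / i.factorial * ((T - σ) ^ j / j.factorial)) • A ^ j‖‖ := le_abs_self _
      _ ≤ ((T ^ i / i.factorial * (T ^ j / j.factorial)) * ‖A ^ j‖)
            * (volume (Set.Ioc (0:ℝ) T)).toReal := by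
          exact norm_setIntegral_le_of_norm_le_const measure_Ioc_lt_top hC
      _ = (T ^ (i + 1) / i.factorial) * ‖((j.factorial : ℝ)⁻¹) • (T • A) ^ j‖ := by
          rw [Real.volume_Ioc, ENNReal.toReal_ofReal (by simpa using hT), smul_pow,
            norm_smul, norm_smul, Real.norm_eq_abs, Real.norm_eq_abs, abs_pow,
            abs_of_nonneg hT, abs_inv, Nat.abs_cast]
          ring
  have hval : ∀ j : ℕ, (∫ σ in Set.Ioc (0:ℝ) T,
      (σ ^ i / i.factorial * ((T - σ) ^ j / j.factorial)) • A ^ j)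
      = ((T ^ (i + 1 + j) / (i + 1 + j).factorial : ℝ)) • A ^ j := by
    intro j
    have hfj : (j.factorial : ℝ) ≠ 0 := Nat.cast_ne_zero.mpr (Nat.factorial_ne_zero _)
    have hfij : ((i + 1 + j).factorial : ℝ) ≠ 0 := Nat.cast_ne_zero.mpr (Nat.factorial_ne_zero _)
    rw [← intervalIntegral.integral_of_le hT, intervalIntegral.integral_smul_const]
    congr 1
    have h2 : (∫ σ in (0:ℝ)..T, σ ^ i / i.factorial * ((T - σ) ^ j / j.factorial))
        = (1 / ((i.factorial : ℝ) * j.factorial)) * ∫ σ in (0:ℝ)..T, σ ^ i * (T - σ) ^ j := by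
      rw [← intervalIntegral.integral_const_mul]
      congr 1; funext σ; field_simp
    rw [h2, beta_nat' T i j, show i + j + 1 = i + 1 + j from by omega]
    field_simp
  rw [intervalIntegral.integral_of_le hT]
  simp_rw [key]
  erw [← integral_tsum_of_summable_integral_norm hint hsum]
  simp_rw [hval]
  rw [← tsum_const_smul'' (T ^ (i + 1) / ((i + 1).factorial : ℝ))]
  refine tsum_congr fun j => ?_
  rw [smul_smul]
  congr 1
  have hp : T ^ (i + 1 + j) = T ^ (i + 1) * T ^ j := pow_add T (i+1) j
  have hf1 : ((i + 1).factorial : ℝ) ≠ 0 := Nat.cast_ne_zero.mpr (Nat.factorial_ne_zero _)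
  have hf2 : ((i + 1 + j).factorial : ℝ) ≠ 0 := Nat.cast_ne_zero.mpr (Nat.factorial_ne_zero _)
  rw [hp]
  field_simp
end

section
/- Let ω : ℝ → ℝ^q be (r+1)-times continuously differentiable, A ∈ ℝ^{n×n}, B ∈ ℝ^{n×q}, t ∈ ℝ, T ≥ 0. Then ∫_t^{t+T} e^{A(t+T-s)} B ω(s) ds = Σ_{i=0}^{r} (T^{i+1}/(i+1)!) Γ_{ω,i}(T) B ω^{(i)}(t) + O_r(t), where O_r(t) = ∫_t^{t+T} ((t+T-s)^{r+1}/(r+1)!) Γ_{ω,r}(t+T-s) B ω^{(r+1)}(s) ds and Γ_{ω,i}(τ) = Σ_{j=0}^∞ ((i+1)!/(i+1+j)!) A^j τ^j. -/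
open MeasureTheory Matrix

/-- The matrix series `Γ_{ω,i}(τ) = Σ_{j=0}^∞ ((i+1)!/(i+1+j)!) A^j τ^j`. -/
noncomputable def Gam {n : ℕ} (A : Matrix (Fin n) (Fin n) ℝ) (i : ℕ) (τ : ℝ) :
    Matrix (Fin n) (Fin n) ℝ :=
  ∑' j : ℕ, (((i + 1).factorial : ℝ) / ((i + 1 + j).factorial) * τ ^ j) • A ^ j

namespace Stmt5Aux

variable {n q : ℕ}

attribute [local instance] Matrix.normedAddCommGroup Matrix.normedSpace

noncomputable local instance : CompleteSpace (Matrix (Fin n) (Fin n) ℝ) :=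
  FiniteDimensional.complete ℝ _

/-- `P A k τ = Σ_j (τ^{k+j}/(k+j)!) A^j`.  Note `P A 0 τ = exp(τ A)` and
`P A (k+1) τ = (τ^{k+1}/(k+1)!) Γ_k(τ)`, with `(P A (k+1))' = P A k`. -/
noncomputable def P (A : Matrix (Fin n) (Fin n) ℝ) (k : ℕ) (τ : ℝ) :
    Matrix (Fin n) (Fin n) ℝ :=
  ∑' j : ℕ, ((τ ^ (k + j) / (k + j).factorial : ℝ)) • A ^ j

lemma norm_matrix_mul_le (A B : Matrix (Fin n) (Fin n) ℝ) :
    ‖A * B‖ ≤ (n : ℝ) * ‖A‖ * ‖B‖ := by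
  refine (Matrix.norm_le_iff (by positivity)).2 fun i j => ?_
  rw [Matrix.mul_apply]
  calc ‖∑ k, A i k * B k j‖ ≤ ∑ k, ‖A i k * B k j‖ := norm_sum_le _ _
    _ ≤ ∑ _k : Fin n, ‖A‖ * ‖B‖ := by
        refine Finset.sum_le_sum fun k _ => ?_
        rw [norm_mul]
        exact mul_le_mul (A.norm_entry_le_entrywise_sup_norm)
          (B.norm_entry_le_entrywise_sup_norm) (norm_nonneg _) (norm_nonneg _)
    _ = (n : ℝ) * ‖A‖ * ‖B‖ := by simp [Finset.sum_const, mul_assoc]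

lemma norm_pow_le (A : Matrix (Fin n) (Fin n) ℝ) (j : ℕ) :
    ‖A ^ j‖ ≤ ((n : ℝ) * ‖A‖ + 1) ^ j := by
  induction j with
  | zero =>
    simp only [pow_zero]
    refine (Matrix.norm_le_iff zero_le_one).2 fun i j => ?_
    rw [Matrix.one_apply]
    split <;> simp
  | succ j ih =>
    rw [pow_succ, pow_succ]
    calc ‖A ^ j * A‖ ≤ (n : ℝ) * ‖A ^ j‖ * ‖A‖ := norm_matrix_mul_le _ _
      _ = ‖A ^ j‖ * ((n : ℝ) * ‖A‖) := by ring
      _ ≤ ((n : ℝ) * ‖A‖ + 1) ^ j * ((n : ℝ) * ‖A‖ + 1) := by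
          have h0 : (0:ℝ) ≤ (n : ℝ) * ‖A‖ := by positivity
          exact mul_le_mul ih (by linarith) h0 (by positivity)

lemma norm_term_le (A : Matrix (Fin n) (Fin n) ℝ) (k j : ℕ) {x R : ℝ} (hR : 1 ≤ R)
    (hx : |x| ≤ R) :
    ‖((x ^ (k + j) / (k + j).factorial : ℝ)) • A ^ j‖ ≤
      R ^ k * ((R * ((n : ℝ) * ‖A‖ + 1)) ^ j / j.factorial) := by
  have hC : (0:ℝ) ≤ (n : ℝ) * ‖A‖ + 1 := by positivity
  have hxn : (0:ℝ) ≤ |x| := abs_nonneg x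
  rw [norm_smul, Real.norm_eq_abs, abs_div, abs_pow]
  have h1 : |((k + j).factorial : ℝ)| = ((k + j).factorial : ℝ) := by
    rw [abs_of_nonneg]; positivity
  rw [h1]
  have hfac : (j.factorial : ℝ) ≤ ((k + j).factorial : ℝ) := by
    exact_mod_cast Nat.factorial_le (Nat.le_add_left j k)
  have hfacpos : (0:ℝ) < (j.factorial : ℝ) := by exact_mod_cast j.factorial_pos
  calc |x| ^ (k + j) / ((k + j).factorial : ℝ) * ‖A ^ j‖
      ≤ R ^ (k + j) / (j.factorial : ℝ) * ((n : ℝ) * ‖A‖ + 1) ^ j := by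
        refine mul_le_mul ?_ (norm_pow_le A j) (norm_nonneg _) (by positivity)
        exact div_le_div₀ (by positivity) (pow_le_pow_left₀ hxn hx _) hfacpos hfac
    _ = R ^ k * ((R * ((n : ℝ) * ‖A‖ + 1)) ^ j / j.factorial) := by
        rw [pow_add, mul_pow]; ring

lemma summable_aux (R C : ℝ) (k : ℕ) :
    Summable fun j : ℕ => R ^ k * ((R * C) ^ j / j.factorial) :=
  (Real.summable_pow_div_factorial (R * C)).mul_left _

lemma summable_P (A : Matrix (Fin n) (Fin n) ℝ) (k : ℕ) (τ : ℝ) :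
    Summable fun j : ℕ => ((τ ^ (k + j) / (k + j).factorial : ℝ)) • A ^ j := by
  refine Summable.of_norm_bounded (summable_aux (|τ| + 1) ((n : ℝ) * ‖A‖ + 1) k)
    fun j => ?_
  exact norm_term_le A k j (by linarith [abs_nonneg τ]) (by linarith)

lemma hasDerivAt_P (A : Matrix (Fin n) (Fin n) ℝ) (k : ℕ) (τ : ℝ) :
    HasDerivAt (P A (k + 1)) (P A k τ) τ := by
  set C : ℝ := (n : ℝ) * ‖A‖ + 1 with hCdef
  set R : ℝ := |τ| + 1 with hRdef
  have hR0 : (0:ℝ) < R := by positivity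
  have hR1 : (1:ℝ) ≤ R := by simp only [hRdef]; linarith [abs_nonneg τ]
  have hg : ∀ (j : ℕ) (y : ℝ), y ∈ Metric.ball (0:ℝ) R →
      HasDerivAt (fun z : ℝ => ((z ^ (k + 1 + j) / (k + 1 + j).factorial : ℝ)) • A ^ j)
        (((y ^ (k + j) / (k + j).factorial : ℝ)) • A ^ j) y := by
    intro j y _
    have h := ((hasDerivAt_pow (k + 1 + j) y).div_const
      ((k + 1 + j).factorial : ℝ)).smul_const (A ^ j)
    convert h using 2
    case e'_4 => rfl
    case e'_5 => rfl
    case e'_6 => rfl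
    have hkj : k + 1 + j - 1 = k + j := by omega
    rw [hkj]
    have hfs : ((k + 1 + j).factorial : ℝ) = ((k + j) + 1) * ((k + j).factorial) := by
      have h2 : k + 1 + j = (k + j) + 1 := by omega
      rw [h2, Nat.factorial_succ]; push_cast; ring
    have hf0 : ((k + j).factorial : ℝ) ≠ 0 := by
      exact_mod_cast (Nat.factorial_pos _).ne'
    rw [hfs]
    field_simp
    push_cast
    ring
  have hg' : ∀ (j : ℕ) (y : ℝ), y ∈ Metric.ball (0:ℝ) R →
      ‖((y ^ (k + j) / (k + j).factorial : ℝ)) • A ^ j‖ ≤ R ^ k * ((R * C) ^ j / j.factorial) := by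
    intro j y hy
    have hy' : |y| ≤ R := by
      rw [Metric.mem_ball, Real.dist_eq, sub_zero] at hy
      exact hy.le
    exact norm_term_le A k j hR1 hy'
  have hmem : τ ∈ Metric.ball (0:ℝ) R := by
    rw [Metric.mem_ball, Real.dist_eq, sub_zero]
    simp only [hRdef]; linarith
  exact hasDerivAt_tsum_of_isPreconnected (summable_aux R C k) Metric.isOpen_ball
    ((convex_ball (0:ℝ) R).isPreconnected) hg hg' (Metric.mem_ball_self hR0)
    (summable_P A (k + 1) 0) hmem

lemma continuous_P_succ (A : Matrix (Fin n) (Fin n) ℝ) (k : ℕ) :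
    Continuous (P A (k + 1)) :=
  continuous_iff_continuousAt.2 fun τ => (hasDerivAt_P A k τ).continuousAt

lemma P_zero_eq (A : Matrix (Fin n) (Fin n) ℝ) (τ : ℝ) :
    P A 0 τ = 1 + A * P A 1 τ := by
  have hs := summable_P A 0 τ
  have L : Matrix (Fin n) (Fin n) ℝ →L[ℝ] Matrix (Fin n) (Fin n) ℝ :=
    LinearMap.toContinuousLinearMap (LinearMap.mulLeft ℝ A)
  rw [P, Summable.tsum_eq_zero_add hs]
  congr 1
  · simp
  · have hmap : A * P A 1 τ =
        ∑' j : ℕ, A * (((τ ^ (1 + j) / (1 + j).factorial : ℝ)) • A ^ j) := by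
      have := (LinearMap.toContinuousLinearMap (LinearMap.mulLeft ℝ A)).map_tsum
        (summable_P A 1 τ)
      simpa [P, LinearMap.mulLeft] using this
    rw [hmap]
    refine tsum_congr fun j => ?_
    have h1 : 0 + (j + 1) = 1 + j := by omega
    rw [h1, mul_smul_comm, ← pow_succ']

lemma continuous_P (A : Matrix (Fin n) (Fin n) ℝ) (k : ℕ) :
    Continuous (P A k) := by
  cases k with
  | zero =>
    have : P A 0 = fun τ => 1 + A * P A 1 τ := funext (P_zero_eq A)
    rw [this]
    exact continuous_const.add (continuous_const.matrix_mul (continuous_P_succ A 0))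
  | succ k => exact continuous_P_succ A k

lemma P_zero_exp (A : Matrix (Fin n) (Fin n) ℝ) (τ : ℝ) :
    NormedSpace.exp (τ • A) = P A 0 τ := by
  rw [NormedSpace.exp_eq_tsum (𝕂 := ℝ), P]
  refine tsum_congr fun j => ?_
  rw [smul_pow, smul_smul]
  congr 1
  rw [zero_add]
  field_simp

lemma P_succ_zero (A : Matrix (Fin n) (Fin n) ℝ) (k : ℕ) : P A (k + 1) 0 = 0 := by
  rw [P]
  convert tsum_zero with j
  rw [zero_pow (by omega : k + 1 + j ≠ 0)]
  simp

lemma summable_Gam (A : Matrix (Fin n) (Fin n) ℝ) (i : ℕ) (τ : ℝ) :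
    Summable fun j : ℕ =>
      (((i + 1).factorial : ℝ) / ((i + 1 + j).factorial) * τ ^ j) • A ^ j := by
  set C : ℝ := (n : ℝ) * ‖A‖ + 1 with hCdef
  have hC : (0:ℝ) ≤ C := by positivity
  refine Summable.of_norm_bounded (Real.summable_pow_div_factorial ((|τ| + 1) * C))
    fun j => ?_
  have hcoef : |((i + 1).factorial : ℝ) / ((i + 1 + j).factorial)| ≤ 1 / j.factorial := by
    rw [abs_of_nonneg (by positivity)]
    rw [div_le_div_iff₀ (by positivity) (by positivity)]
    have := Nat.factorial_mul_factorial_dvd_factorial_add (i + 1) j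
    have hle : (i + 1).factorial * j.factorial ≤ (i + 1 + j).factorial :=
      Nat.le_of_dvd (Nat.factorial_pos _) this
    calc ((i + 1).factorial : ℝ) * j.factorial ≤ ((i + 1 + j).factorial : ℝ) := by
          exact_mod_cast hle
      _ = 1 * ((i + 1 + j).factorial : ℝ) := by ring
  calc ‖(((i + 1).factorial : ℝ) / ((i + 1 + j).factorial) * τ ^ j) • A ^ j‖
      = |((i + 1).factorial : ℝ) / ((i + 1 + j).factorial)| * |τ| ^ j * ‖A ^ j‖ := by
        rw [norm_smul, Real.norm_eq_abs, abs_mul, abs_pow, mul_assoc]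
    _ ≤ (1 / j.factorial) * (|τ| + 1) ^ j * C ^ j := by
        gcongr
        · linarith [abs_nonneg τ]
        · exact norm_pow_le A j
    _ = ((|τ| + 1) * C) ^ j / j.factorial := by rw [mul_pow]; ring

lemma P_eq_Gam (A : Matrix (Fin n) (Fin n) ℝ) (i : ℕ) (τ : ℝ) :
    (τ ^ (i + 1) / (i + 1).factorial : ℝ) • Gam A i τ = P A (i + 1) τ := by
  rw [Gam, P, ← Summable.tsum_const_smul _ (summable_Gam A i τ)]
  refine tsum_congr fun j => ?_
  rw [smul_smul]
  congr 1
  have h1 : ((i + 1).factorial : ℝ) ≠ 0 := by exact_mod_cast (Nat.factorial_pos _).ne'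
  have h2 : ((i + 1 + j).factorial : ℝ) ≠ 0 := by exact_mod_cast (Nat.factorial_pos _).ne'
  rw [pow_add]
  field_simp
  ring

/-- `mulVec` as a continuous bilinear map. -/
noncomputable def Phi : Matrix (Fin n) (Fin q) ℝ →L[ℝ] ((Fin q → ℝ) →L[ℝ] (Fin n → ℝ)) :=
  LinearMap.toContinuousLinearMap
    { toFun := fun M => LinearMap.toContinuousLinearMap M.mulVecLin
      map_add' := fun M N => by
        ext v i
        simp [Matrix.add_mulVec]
      map_smul' := fun c M => by
        ext v i
        simp [Matrix.smul_mulVec] }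

lemma Phi_apply (M : Matrix (Fin n) (Fin q) ℝ) (v : Fin q → ℝ) :
    Phi M v = M.mulVec v := rfl

/-- Right multiplication by `B` as a continuous linear map. -/
noncomputable def RB (B : Matrix (Fin n) (Fin q) ℝ) :
    Matrix (Fin n) (Fin n) ℝ →L[ℝ] Matrix (Fin n) (Fin q) ℝ :=
  LinearMap.toContinuousLinearMap
    { toFun := fun M => M * B
      map_add' := fun M N => Matrix.add_mul M N B
      map_smul' := fun c M => Matrix.smul_mul c M B }

lemma RB_apply (B : Matrix (Fin n) (Fin q) ℝ) (M : Matrix (Fin n) (Fin n) ℝ) :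
    RB B M = M * B := rfl

/-- The integration by parts step. -/
lemma key (A : Matrix (Fin n) (Fin n) ℝ) (B : Matrix (Fin n) (Fin q) ℝ) (k : ℕ) (t T : ℝ)
    (g g' : ℝ → Fin q → ℝ) (hg : ∀ s, HasDerivAt g (g' s) s) (hg'c : Continuous g') :
    (∫ s in t..(t + T), (P A k (t + T - s) * B).mulVec (g s)) =
      (P A (k + 1) T * B).mulVec (g t)
        + ∫ s in t..(t + T), (P A (k + 1) (t + T - s) * B).mulVec (g' s) := by
  have hgc : Continuous g := continuous_iff_continuousAt.2 fun s => (hg s).continuousAt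
  have haffc : Continuous fun s : ℝ => t + T - s := by continuity
  have hcont1 : Continuous fun s => (P A k (t + T - s) * B).mulVec (g s) :=
    (((continuous_P A k).comp haffc).matrix_mul continuous_const).matrix_mulVec hgc
  have hcont2 : Continuous fun s => (P A (k + 1) (t + T - s) * B).mulVec (g' s) :=
    (((continuous_P A (k + 1)).comp haffc).matrix_mul continuous_const).matrix_mulVec hg'c
  have hderiv : ∀ s : ℝ,
      HasDerivAt (fun s => (P A (k + 1) (t + T - s) * B).mulVec (g s))
        (-((P A k (t + T - s) * B).mulVec (g s))
          + (P A (k + 1) (t + T - s) * B).mulVec (g' s)) s := by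
    intro s
    have haff : HasDerivAt (fun s : ℝ => t + T - s) (-1) s := by
      simpa using (hasDerivAt_id s).const_sub (t + T)
    have hP1 : HasDerivAt (fun s : ℝ => P A (k + 1) (t + T - s))
        ((-1 : ℝ) • P A k (t + T - s)) s := (hasDerivAt_P A k (t + T - s)).scomp s haff
    have hM : HasDerivAt (fun s : ℝ => P A (k + 1) (t + T - s) * B)
        (((-1 : ℝ) • P A k (t + T - s)) * B) s :=
      (RB B).hasFDerivAt.comp_hasDerivAt s hP1
    have hc : HasDerivAt (fun s : ℝ => Phi (P A (k + 1) (t + T - s) * B))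
        (Phi (((-1 : ℝ) • P A k (t + T - s)) * B)) s :=
      Phi.hasFDerivAt.comp_hasDerivAt s hM
    have h := hc.clm_apply (hg s)
    have hval : Phi (((-1 : ℝ) • P A k (t + T - s)) * B) (g s)
        = -((P A k (t + T - s) * B).mulVec (g s)) := by
      rw [Phi_apply, neg_one_smul, Matrix.neg_mul, Matrix.neg_mulVec]
    simpa [Phi_apply, hval] using h
  have hint : IntervalIntegrable
      (fun s => -((P A k (t + T - s) * B).mulVec (g s))
        + (P A (k + 1) (t + T - s) * B).mulVec (g' s)) volume t (t + T) :=
    (hcont1.neg.add hcont2).intervalIntegrable _ _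
  have heq := intervalIntegral.integral_eq_sub_of_hasDerivAt
    (f := fun s => (P A (k + 1) (t + T - s) * B).mulVec (g s)) (fun s _ => hderiv s) hint
  rw [intervalIntegral.integral_add (f := fun s => -((P A k (t + T - s) * B).mulVec (g s)))
    (g := fun s => (P A (k + 1) (t + T - s) * B).mulVec (g' s)) (hcont1.neg.intervalIntegrable _ _)
    (hcont2.intervalIntegrable _ _), intervalIntegral.integral_neg] at heq
  have hend : (P A (k + 1) (t + T - (t + T)) * B).mulVec (g (t + T)) = 0 := by
    rw [sub_self, P_succ_zero, Matrix.zero_mul, Matrix.zero_mulVec]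
  rw [hend, zero_sub, show t + T - t = T by ring] at heq
  calc (∫ s in t..(t + T), (P A k (t + T - s) * B).mulVec (g s))
      = -((-∫ s in t..(t + T), (P A k (t + T - s) * B).mulVec (g s))
          + ∫ s in t..(t + T), (P A (k + 1) (t + T - s) * B).mulVec (g' s))
        + ∫ s in t..(t + T), (P A (k + 1) (t + T - s) * B).mulVec (g' s) := by abel
    _ = -(-((P A (k + 1) T * B).mulVec (g t)))
        + ∫ s in t..(t + T), (P A (k + 1) (t + T - s) * B).mulVec (g' s) := by rw [heq]
    _ = (P A (k + 1) T * B).mulVec (g t)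
        + ∫ s in t..(t + T), (P A (k + 1) (t + T - s) * B).mulVec (g' s) := by abel

lemma main (A : Matrix (Fin n) (Fin n) ℝ) (B : Matrix (Fin n) (Fin q) ℝ) (r : ℕ)
    (ω : ℝ → Fin q → ℝ) (hω : ContDiff ℝ (r + 1) ω) (t T : ℝ) :
    ∀ m ≤ r + 1,
      (∫ s in t..(t + T), (P A 0 (t + T - s) * B).mulVec (ω s)) =
        (∑ i ∈ Finset.range m, (P A (i + 1) T * B).mulVec (iteratedDeriv i ω t))
          + ∫ s in t..(t + T), (P A m (t + T - s) * B).mulVec (iteratedDeriv m ω s) := by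
  intro m
  induction m with
  | zero => intro _; simp [iteratedDeriv_zero]
  | succ m ih =>
    intro hm
    have hmr : m ≤ r + 1 := by omega
    have hdiff : Differentiable ℝ (iteratedDeriv m ω) :=
      hω.differentiable_iteratedDeriv m (by exact_mod_cast (by omega : m < r + 1))
    have hg : ∀ s, HasDerivAt (iteratedDeriv m ω) (iteratedDeriv (m + 1) ω s) s := by
      intro s
      rw [iteratedDeriv_succ]
      exact (hdiff s).hasDerivAt
    have hg'c : Continuous (iteratedDeriv (m + 1) ω) :=
      hω.continuous_iteratedDeriv (m + 1) (by exact_mod_cast hm)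
    rw [ih hmr, key A B m t T _ _ hg hg'c, Finset.sum_range_succ]
    abel

end Stmt5Aux

open Stmt5Aux in
/-- Decomposition of the disturbance convolution integral (the paper's key Lemma, Eq. (4)). -/
theorem stmt5 {n q r : ℕ} (A : Matrix (Fin n) (Fin n) ℝ) (B : Matrix (Fin n) (Fin q) ℝ)
    (ω : ℝ → Fin q → ℝ) (hω : ContDiff ℝ (r + 1) ω) (t T : ℝ) (hT : 0 ≤ T) :
    (∫ s in t..(t + T), (NormedSpace.exp ((t + T - s) • A) * B).mulVec (ω s)) =
      (∑ i ∈ Finset.range (r + 1),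
          (T ^ (i + 1) / (i + 1).factorial : ℝ) •
            (Gam A i T * B).mulVec (iteratedDeriv i ω t))
        + ∫ s in t..(t + T),
            ((t + T - s) ^ (r + 1) / (r + 1).factorial : ℝ) •
              (Gam A r (t + T - s) * B).mulVec (iteratedDeriv (r + 1) ω s) := by
  have hterm : ∀ (i : ℕ) (τ : ℝ) (v : Fin q → ℝ),
      (τ ^ (i + 1) / (i + 1).factorial : ℝ) • (Gam A i τ * B).mulVec v
        = (P A (i + 1) τ * B).mulVec v := by
    intro i τ v
    rw [← P_eq_Gam A i τ, Matrix.smul_mul, Matrix.smul_mulVec]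
  have h0 : ∀ s : ℝ, (NormedSpace.exp ((t + T - s) • A) * B).mulVec (ω s)
      = (P A 0 (t + T - s) * B).mulVec (ω s) := fun s => by rw [P_zero_exp]
  simp only [h0, hterm]
  exact main A B r ω hω t T (r + 1) le_rfl
end

section
/- Let x solve ẋ(t) = A x(t) + B_u u(t-h) + B_ω ω(t) with u piecewise constant on [t-h, t+T-h] taking values u_0, ..., u_N on consecutive intervals separated by times t_1 < ... < t_N, and ω (r+1)-times continuously differentiable. Then x(t+T) = e^{AT} x(t) + Γ_u-terms + Σ_{i=0}^r (T^{i+1}/(i+1)!) Γ_{ω,i}(T) B_ω ω^{(i)}(t) + O_r(t), where the Γ_u-terms are Γ_u(t, t_1+h) u_0 + Σ_{k=1}^{N-1} Γ_u(t_k+h, t_{k+1}+h) u_k + Γ_u(t_N+h, t+T) u_N with Γ_u(α,β) = ∫_α^β e^{A(t+T-s)} B_u ds. -/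
open MeasureTheory Matrix

open NormedSpace

set_option maxHeartbeats 1000000
set_option synthInstance.maxHeartbeats 200000


noncomputable def matEc {n : ℕ} : Matrix (Fin n) (Fin n) ℝ ≃L[ℝ] ((Fin n → ℝ) →L[ℝ] (Fin n → ℝ)) :=
  (Matrix.toLin'.trans LinearMap.toContinuousLinearMap).toContinuousLinearEquiv

@[simp] lemma matEc_apply {n : ℕ} (M : Matrix (Fin n) (Fin n) ℝ) (v : Fin n → ℝ) :
    matEc M v = M.mulVec v := rfl

lemma matEc_mul {n : ℕ} (M N : Matrix (Fin n) (Fin n) ℝ) :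
    matEc (M * N) = matEc M * matEc N := by
  ext v; simp [Matrix.mulVec_mulVec]

lemma matEc_pow {n : ℕ} (M : Matrix (Fin n) (Fin n) ℝ) (j : ℕ) :
    matEc (M ^ j) = (matEc M) ^ j := by
  induction j with
  | zero => ext v; simp [Matrix.one_mulVec]
  | succ j ih => rw [pow_succ, pow_succ, matEc_mul, ih]

variable {n : ℕ} (L : (Fin n → ℝ) →L[ℝ] (Fin n → ℝ))

/-- `Gs L k τ = ∑' j, (τ^(k+j)/(k+j)!) • L^j`. -/
noncomputable def Gs (k : ℕ) (τ : ℝ) : (Fin n → ℝ) →L[ℝ] (Fin n → ℝ) :=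
  ∑' j : ℕ, (τ ^ (k + j) / (k + j).factorial : ℝ) • L ^ j

lemma my_norm_pow_le (j : ℕ) : ‖L ^ j‖ ≤ ‖L‖ ^ j := by
  induction j with
  | zero => rw [pow_zero, pow_zero]; exact ContinuousLinearMap.norm_id_le
  | succ j ih =>
    rw [pow_succ, pow_succ]
    calc ‖L ^ j * L‖ ≤ ‖L ^ j‖ * ‖L‖ := norm_mul_le _ _
    _ ≤ ‖L‖ ^ j * ‖L‖ := mul_le_mul_of_nonneg_right ih (norm_nonneg L)

lemma aux_summable (k : ℕ) (R : ℝ) :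
    Summable (fun j : ℕ => |R| ^ (k + j) / (k + j).factorial * ‖L‖ ^ j) := by
  have h0 : ∀ j : ℕ, |R| ^ (k + j) / (k + j).factorial * ‖L‖ ^ j
      ≤ |R| ^ k * ((|R| * (1 + ‖L‖)) ^ j / j.factorial) := by
    intro j
    have h1 : ((j.factorial : ℝ)) ≤ ((k + j).factorial : ℝ) := by
      exact_mod_cast Nat.factorial_le (Nat.le_add_left _ _)
    have h2 : (0:ℝ) < j.factorial := by positivity
    have h4 : ‖L‖ ^ j ≤ (1 + ‖L‖) ^ j := by
      exact pow_le_pow_left₀ (norm_nonneg L) (by linarith) j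
    calc |R| ^ (k + j) / (k + j).factorial * ‖L‖ ^ j
        ≤ |R| ^ (k + j) / j.factorial * ‖L‖ ^ j := by gcongr
        _ ≤ |R| ^ (k + j) / j.factorial * (1 + ‖L‖) ^ j := by
          have : (0:ℝ) ≤ |R| ^ (k + j) / j.factorial := by positivity
          exact mul_le_mul_of_nonneg_left h4 this
        _ = |R| ^ k * ((|R| * (1 + ‖L‖)) ^ j / j.factorial) := by
          rw [pow_add, mul_pow]; ring
  refine Summable.of_nonneg_of_le (fun j => by positivity) h0 ?_
  exact ((Real.summable_pow_div_factorial _).mul_left _)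

lemma Gs_term_summable (k : ℕ) (τ : ℝ) :
    Summable (fun j : ℕ => (τ ^ (k + j) / (k + j).factorial : ℝ) • L ^ j) := by
  refine Summable.of_norm_bounded (aux_summable L k τ) (fun j => ?_)
  rw [norm_smul (τ ^ (k + j) / (k + j).factorial : ℝ) (L ^ j)]
  have : ‖(τ ^ (k + j) / (k + j).factorial : ℝ)‖ = |τ| ^ (k + j) / (k + j).factorial := by
    rw [Real.norm_eq_abs, abs_div, abs_pow]
    congr 1
    exact abs_of_nonneg (by positivity)
  rw [this]
  exact mul_le_mul_of_nonneg_left (my_norm_pow_le L j) (by positivity)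

lemma Gs_zero (τ : ℝ) : Gs L 0 τ = exp (τ • L) := by
  rw [exp_eq_tsum ℝ, Gs]
  refine tsum_congr fun j => ?_
  rw [smul_pow, smul_smul]
  congr 1
  simp only [zero_add]
  rw [div_eq_inv_mul, mul_comm]

lemma Gs_at_zero (k : ℕ) : Gs L (k + 1) (0 : ℝ) = 0 := by
  rw [Gs]
  convert tsum_zero with j
  simp [zero_pow (by omega : k + 1 + j ≠ 0)]

lemma Gs_hasDerivAt (k : ℕ) (τ : ℝ) :
    HasDerivAt (fun σ => Gs L (k + 1) σ) (Gs L k τ) τ := by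
  have key : HasDerivAt (fun σ => Gs L (k+1) σ)
      (∑' j : ℕ, (τ ^ (k + j) / (k + j).factorial : ℝ) • L ^ j) τ := by
    refine hasDerivAt_tsum_of_isPreconnected (aux_summable L k (|τ|+1))
      (Metric.isOpen_ball (x := (0:ℝ)) (ε := |τ|+1)) (convex_ball _ _).isPreconnected
      (y₀ := (0:ℝ)) (g := fun j σ => (σ ^ (k + 1 + j) / (k + 1 + j).factorial : ℝ) • L ^ j)
      (g' := fun j σ => (σ ^ (k + j) / (k + j).factorial : ℝ) • L ^ j)
      (fun j σ _ => ?_) (fun j σ hσ => ?_) ?_ ?_ ?_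
    · have h1 : HasDerivAt (fun σ : ℝ => (σ ^ (k + 1 + j) / (k + 1 + j).factorial : ℝ))
          (σ ^ (k + j) / (k + j).factorial) σ := by
        have h2 : ((k+1+j).factorial : ℝ) = (k+1+j) * (k+j).factorial := by
          rw [show k+1+j = (k+j)+1 by omega, Nat.factorial_succ]; push_cast; ring
        have hd := (hasDerivAt_pow (k+1+j) σ).div_const ((k+1+j).factorial : ℝ)
        refine hd.congr_deriv ?_
        rw [h2, show k + 1 + j - 1 = k + j by omega]
        have h3 : ((k+j).factorial : ℝ) ≠ 0 := by positivity
        have h4 : ((k+1+j : ℕ) : ℝ) ≠ 0 := by positivity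
        field_simp
        push_cast
        ring
      exact h1.smul_const (L ^ j)
    · 
      rw [norm_smul (σ ^ (k + j) / ((k + j).factorial : ℝ)) (L ^ j)]
      have hb : |σ| < |τ| + 1 := by
        simpa [Real.dist_eq] using hσ
      have : ‖(σ ^ (k + j) / (k + j).factorial : ℝ)‖ ≤ (|τ|+1) ^ (k + j) / (k + j).factorial := by
        rw [Real.norm_eq_abs, abs_div, abs_pow]
        rw [abs_of_nonneg (by positivity : (0:ℝ) ≤ ((k+j).factorial : ℝ))]
        gcongr
      calc ‖(σ ^ (k + j) / (k + j).factorial : ℝ)‖ * ‖L ^ j‖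
          ≤ ((|τ|+1) ^ (k + j) / (k + j).factorial) * ‖L‖ ^ j := by
            have h0 : (0:ℝ) ≤ ‖(σ ^ (k + j) / (k + j).factorial : ℝ)‖ := norm_nonneg _
            exact mul_le_mul this (my_norm_pow_le L j) (norm_nonneg _) (by positivity)
          _ = |(|τ|+1)| ^ (k + j) / (k + j).factorial * ‖L‖ ^ j := by
            rw [abs_of_nonneg (by positivity : (0:ℝ) ≤ |τ|+1)]
    · exact Metric.mem_ball_self (by positivity)
    · refine summable_of_ne_finset_zero (s := ∅) (fun j _ => ?_)
      simp [zero_pow (by omega : k + 1 + j ≠ 0)]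
    · simpa [Real.dist_eq] using (by linarith [abs_nonneg τ] : |τ| < |τ| + 1)
  exact key

lemma Gs_continuous (k : ℕ) : Continuous (fun τ => Gs L k τ) := by
  cases k with
  | zero =>
    have : (fun τ => Gs L 0 τ) = fun τ => exp (τ • L) := funext fun τ => Gs_zero L τ
    rw [this]
    exact continuous_iff_continuousAt.2 fun τ => (hasDerivAt_exp_smul_const L τ).continuousAt
  | succ k =>
    exact continuous_iff_continuousAt.2 fun τ => (Gs_hasDerivAt L k τ).continuousAt

open Nat in
lemma gam_term_summable {n : ℕ} (A : Matrix (Fin n) (Fin n) ℝ) (i : ℕ) (τ : ℝ) :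
    Summable (fun j : ℕ =>
      (((i + 1).factorial : ℝ) / ((i + 1 + j).factorial) * τ ^ j) • (matEc A) ^ j) := by
  set L := matEc (n := n) A
  refine Summable.of_norm_bounded (aux_summable L 0 τ) (fun j => ?_)
  rw [norm_smul ((((i + 1).factorial : ℝ)) / ((i + 1 + j).factorial) * τ ^ j) (L ^ j)]
  simp only [Nat.zero_add, zero_add]
  have key : ((i+1).factorial : ℝ) * j.factorial ≤ ((i+1+j).factorial : ℝ) := by
    exact_mod_cast Nat.le_of_dvd (Nat.factorial_pos _)
      (Nat.factorial_mul_factorial_dvd_factorial_add (i+1) j)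
  have hc : ‖(((i + 1).factorial : ℝ) / ((i + 1 + j).factorial) * τ ^ j)‖
      ≤ |τ| ^ j / j.factorial := by
    rw [Real.norm_eq_abs, abs_mul, abs_div, abs_pow]
    rw [abs_of_nonneg (by positivity : (0:ℝ) ≤ (((i+1).factorial : ℕ) : ℝ)),
      abs_of_nonneg (by positivity : (0:ℝ) ≤ (((i+1+j).factorial : ℕ) : ℝ))]
    have hfrac : ((i+1).factorial : ℝ)/((i+1+j).factorial) ≤ 1 / j.factorial := by
      rw [div_le_div_iff₀ (by positivity) (by positivity)]
      linarith
    calc ((i+1).factorial : ℝ)/((i+1+j).factorial) * |τ| ^ j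
        ≤ 1 / j.factorial * |τ| ^ j := mul_le_mul_of_nonneg_right hfrac (by positivity)
      _ = |τ| ^ j / j.factorial := by ring
  exact mul_le_mul hc (my_norm_pow_le L j) (norm_nonneg _) (by positivity)


lemma Gs_apply {n : ℕ} (L : (Fin n → ℝ) →L[ℝ] (Fin n → ℝ)) (k : ℕ) (τ : ℝ) (w : Fin n → ℝ) :
    Gs L k τ w = ∑' j : ℕ, (τ ^ (k + j) / (k + j).factorial : ℝ) • (L ^ j) w := by
  rw [Gs]
  have := (ContinuousLinearMap.apply ℝ (Fin n → ℝ) w).map_tsum (Gs_term_summable L k τ)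
  simpa using this

lemma gam_apply {n : ℕ} (A : Matrix (Fin n) (Fin n) ℝ) (i : ℕ) (τ : ℝ) (w : Fin n → ℝ) :
    (τ ^ (i + 1) / (i + 1).factorial : ℝ) • (Gam A i τ).mulVec w
      = Gs (matEc A) (i + 1) τ w := by
  set L := matEc (n := n) A with hL
  have h1 : matEc (Gam A i τ)
      = ∑' j : ℕ, (((i + 1).factorial : ℝ) / ((i + 1 + j).factorial) * τ ^ j) • L ^ j := by
    rw [Gam, ContinuousLinearEquiv.map_tsum]
    exact tsum_congr fun j => by rw [_root_.map_smul, matEc_pow]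
  have h2 : (Gam A i τ).mulVec w
      = ∑' j : ℕ, (((i + 1).factorial : ℝ) / ((i + 1 + j).factorial) * τ ^ j) • (L ^ j) w := by
    have := (ContinuousLinearMap.apply ℝ (Fin n → ℝ) w).map_tsum (gam_term_summable A i τ)
    have h3 : matEc (Gam A i τ) w = (Gam A i τ).mulVec w := rfl
    rw [← h3, h1]
    simpa using this
  have hsum : Summable (fun j : ℕ =>
      (((i + 1).factorial : ℝ) / ((i + 1 + j).factorial) * τ ^ j) • (L ^ j) w) := by
    have := (gam_term_summable A i τ).map (ContinuousLinearMap.apply ℝ (Fin n → ℝ) w)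
      (ContinuousLinearMap.apply ℝ (Fin n → ℝ) w).continuous
    exact this
  rw [h2, Gs_apply, ← Summable.tsum_const_smul (τ ^ (i + 1) / ((i + 1).factorial : ℝ)) hsum]
  refine tsum_congr fun j => ?_
  rw [smul_smul]
  congr 1
  have h5 : ((i+1).factorial : ℝ) ≠ 0 := by positivity
  have h6 : ((i+1+j).factorial : ℝ) ≠ 0 := by positivity
  rw [pow_add]
  field_simp
  ring

lemma matEc_exp {n : ℕ} (A : Matrix (Fin n) (Fin n) ℝ) (c : ℝ) :
    matEc (exp (c • A)) = exp (c • matEc A) := by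
  rw [exp_eq_tsum ℝ, exp_eq_tsum ℝ, ContinuousLinearEquiv.map_tsum]
  refine tsum_congr fun j => ?_
  rw [_root_.map_smul, matEc_pow, _root_.map_smul]

lemma exp_mulVec {n : ℕ} (A : Matrix (Fin n) (Fin n) ℝ) (c : ℝ) (v : Fin n → ℝ) :
    (exp (c • A)).mulVec v = exp (c • matEc A) v := by
  rw [← matEc_exp]; rfl

lemma parts {n : ℕ} (L : (Fin n → ℝ) →L[ℝ] (Fin n → ℝ)) (i : ℕ) (a b : ℝ)
    (v v' : ℝ → Fin n → ℝ) (hv : ∀ s, HasDerivAt v (v' s) s) (hv' : Continuous v') :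
    ∫ s in a..b, Gs L i (b - s) (v s) =
      Gs L (i + 1) (b - a) (v a) + ∫ s in a..b, Gs L (i + 1) (b - s) (v' s) := by
  have hvc : Continuous v := by
    have : Differentiable ℝ v := fun s => (hv s).differentiableAt
    exact this.continuous
  have hc : ∀ s : ℝ, HasDerivAt (fun σ => Gs L (i + 1) (b - σ)) (-(Gs L i (b - s))) s := by
    intro s
    have h1 : HasDerivAt (fun σ : ℝ => b - σ) (-1) s := by
      simpa using (hasDerivAt_id s).const_sub b
    have := (Gs_hasDerivAt L i (b - s)).scomp s h1
    simpa [Function.comp_def] using this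
  have hP : ∀ s : ℝ, HasDerivAt (fun σ => Gs L (i + 1) (b - σ) (v σ))
      (Gs L (i + 1) (b - s) (v' s) - Gs L i (b - s) (v s)) s := by
    intro s
    have := (hc s).clm_apply (hv s)
    refine this.congr_deriv ?_
    simp [sub_eq_add_neg, add_comm]
  have hint1 : IntervalIntegrable (fun s => Gs L (i + 1) (b - s) (v' s)) volume a b := by
    apply Continuous.intervalIntegrable
    exact ((Gs_continuous L (i + 1)).comp (continuous_const.sub continuous_id)).clm_apply hv'
  have hint2 : IntervalIntegrable (fun s => Gs L i (b - s) (v s)) volume a b := by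
    apply Continuous.intervalIntegrable
    exact ((Gs_continuous L i).comp (continuous_const.sub continuous_id)).clm_apply hvc
  have hFTC := intervalIntegral.integral_eq_sub_of_hasDerivAt (f' := fun s =>
      Gs L (i + 1) (b - s) (v' s) - Gs L i (b - s) (v s))
      (fun s _ => hP s) (hint1.sub hint2)
  rw [intervalIntegral.integral_sub hint1 hint2] at hFTC
  have hb0 : Gs L (i + 1) (b - b) (v b) = 0 := by
    rw [sub_self, Gs_at_zero]; simp
  rw [hb0] at hFTC
  rw [zero_sub, sub_eq_iff_eq_add] at hFTC
  rw [hFTC]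
  abel

lemma omega_expand {n q r : ℕ} (L : (Fin n → ℝ) →L[ℝ] (Fin n → ℝ))
    (Bω : Matrix (Fin n) (Fin q) ℝ) (ω : ℝ → Fin q → ℝ) (hω : ContDiff ℝ (r + 1) ω)
    (t T : ℝ) :
    ∫ s in t..(t + T), Gs L 0 (t + T - s) (Bω.mulVec (ω s)) =
      (∑ i ∈ Finset.range (r + 1), Gs L (i + 1) T (Bω.mulVec (iteratedDeriv i ω t)))
        + ∫ s in t..(t + T), Gs L (r + 1) (t + T - s) (Bω.mulVec (iteratedDeriv (r + 1) ω s)) := by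
  set BW : (Fin q → ℝ) →L[ℝ] (Fin n → ℝ) := LinearMap.toContinuousLinearMap Bω.mulVecLin with hBW
  have hBWa : ∀ w, Bω.mulVec w = BW w := fun w => rfl
  have key : ∀ i : ℕ, i ≤ r + 1 →
      ∫ s in t..(t + T), Gs L 0 (t + T - s) (Bω.mulVec (ω s)) =
        (∑ k ∈ Finset.range i, Gs L (k + 1) T (Bω.mulVec (iteratedDeriv k ω t)))
          + ∫ s in t..(t + T), Gs L i (t + T - s) (Bω.mulVec (iteratedDeriv i ω s)) := by
    intro i
    induction i with
    | zero => intro _; simp [iteratedDeriv_zero]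
    | succ i ih =>
      intro hi
      have hir : i < r + 1 := by omega
      rw [ih (by omega)]
      have hdiff : Differentiable ℝ (iteratedDeriv i ω) :=
        hω.differentiable_iteratedDeriv i (by exact_mod_cast hir)
      have hder : ∀ s : ℝ, HasDerivAt (fun σ => Bω.mulVec (iteratedDeriv i ω σ))
          (Bω.mulVec (iteratedDeriv (i + 1) ω s)) s := by
        intro s
        have h1 : HasDerivAt (iteratedDeriv i ω) (iteratedDeriv (i + 1) ω s) s := by
          rw [iteratedDeriv_succ]
          exact (hdiff s).hasDerivAt
        have := BW.hasFDerivAt.comp_hasDerivAt s h1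
        simpa [hBWa, Function.comp_def] using this
      have hcont : Continuous (fun s => Bω.mulVec (iteratedDeriv (i + 1) ω s)) := by
        simp only [hBWa]
        exact BW.continuous.comp (hω.continuous_iteratedDeriv (i + 1) (by exact_mod_cast hi))
      have hparts := parts L i t (t + T)
        (fun s => Bω.mulVec (iteratedDeriv i ω s))
        (fun s => Bω.mulVec (iteratedDeriv (i + 1) ω s)) hder hcont
      rw [show t + T - t = T by ring] at hparts
      rw [hparts, Finset.sum_range_succ]
      abel
  exact key (r + 1) le_rfl

lemma voc {n : ℕ} (A : Matrix (Fin n) (Fin n) ℝ) (x g : ℝ → Fin n → ℝ)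
    (hx : ∀ s, HasDerivAt x (A.mulVec (x s) + g s) s) (t T : ℝ)
    (hint : IntervalIntegrable (fun s => exp ((t + T - s) • matEc A) (g s)) volume t (t + T)) :
    x (t + T) = exp (T • matEc A) (x t)
      + ∫ s in t..(t + T), exp ((t + T - s) • matEc A) (g s) := by
  set L := matEc (n := n) A with hL
  have hA : ∀ w, A.mulVec w = L w := fun w => rfl
  have hc : ∀ s : ℝ, HasDerivAt (fun σ => exp ((t + T - σ) • L))
      (-(L * exp ((t + T - s) • L))) s := by
    intro s
    have h1 : HasDerivAt (fun σ : ℝ => t + T - σ) (-1) s := by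
      simpa using (hasDerivAt_id s).const_sub (t + T)
    have := (hasDerivAt_exp_smul_const' L (t + T - s)).scomp s h1
    simpa [Function.comp_def] using this
  have hP : ∀ s : ℝ, HasDerivAt (fun σ => exp ((t + T - σ) • L) (x σ))
      (exp ((t + T - s) • L) (g s)) s := by
    intro s
    have := (hc s).clm_apply (hx s)
    have hcomm : exp ((t + T - s) • L) * L = L * exp ((t + T - s) • L) :=
      (((Commute.refl L).smul_left (t + T - s)).exp_left)
    refine this.congr_deriv ?_
    have : exp ((t + T - s) • L) (A.mulVec (x s)) = (L * exp ((t + T - s) • L)) (x s) := by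
      rw [← hcomm]
      simp [hA, ContinuousLinearMap.mul_apply]
    simp only [map_add, this, ContinuousLinearMap.neg_apply]
    abel
  have hFTC := intervalIntegral.integral_eq_sub_of_hasDerivAt (f' := fun s =>
      exp ((t + T - s) • L) (g s)) (fun s _ => hP s) hint
  have h0 : exp ((t + T - (t + T)) • L) (x (t + T)) = x (t + T) := by
    rw [sub_self, zero_smul, exp_zero]
    simp
  have h1 : exp ((t + T - t) • L) (x t) = exp (T • L) (x t) := by
    rw [show t + T - t = T by ring]
  rw [h0, h1] at hFTC
  rw [eq_comm, sub_eq_iff_eq_add] at hFTC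
  rw [hFTC]
  abel

/-- Exact representation of the future state (Eq. (6) of the paper): the jumping instants of the
piecewise-constant delayed input are `τ 1 < … < τ N` (with `τ 0 = t - h`, `τ (N+1) = t + T - h`
as artificial endpoints), and the value on the `k`-th subinterval is `uv k`. -/
theorem stmt7 {n m q r N : ℕ} (A : Matrix (Fin n) (Fin n) ℝ)
    (Bu : Matrix (Fin n) (Fin m) ℝ) (Bω : Matrix (Fin n) (Fin q) ℝ)
    (x : ℝ → Fin n → ℝ) (u : ℝ → Fin m → ℝ) (ω : ℝ → Fin q → ℝ)
    (hω : ContDiff ℝ (r + 1) ω) (h t T : ℝ) (hh : 0 ≤ h) (hT : 0 ≤ T)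
    (hx : ∀ s : ℝ,
      HasDerivAt x (A.mulVec (x s) + Bu.mulVec (u (s - h)) + Bω.mulVec (ω s)) s)
    (τ : Fin (N + 2) → ℝ) (hτ0 : τ 0 = t - h) (hτN : τ (Fin.last (N + 1)) = t + T - h)
    (hτmono : StrictMono τ)
    (uv : Fin (N + 1) → Fin m → ℝ)
    (hu : ∀ k : Fin (N + 1), ∀ φ : ℝ, τ k.castSucc ≤ φ → φ < τ k.succ → u φ = uv k)
    (huend : u (t + T - h) = uv (Fin.last N)) :
    x (t + T) =
      (NormedSpace.exp (T • A)).mulVec (x t)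
        + (∑ k : Fin (N + 1),
            ∫ s in (τ k.castSucc + h)..(τ k.succ + h),
              (NormedSpace.exp ((t + T - s) • A) * Bu).mulVec (uv k))
        + (∑ i ∈ Finset.range (r + 1),
            (T ^ (i + 1) / (i + 1).factorial : ℝ) •
              (Gam A i T * Bω).mulVec (iteratedDeriv i ω t))
        + ∫ s in t..(t + T),
            ((t + T - s) ^ (r + 1) / (r + 1).factorial : ℝ) •
              (Gam A r (t + T - s) * Bω).mulVec (iteratedDeriv (r + 1) ω s) := by
  set L := matEc (n := n) A with hLdef
  -- the partition points, as a function on ℕ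
  set aa : ℕ → ℝ := fun k => τ ⟨min k (N + 1), by omega⟩ + h with haa
  have haa0 : aa 0 = t := by
    simp only [haa]
    have h0 : (⟨min 0 (N + 1), by omega⟩ : Fin (N + 2)) = 0 := by
      apply Fin.ext; simp
    rw [h0, hτ0]; ring
  have haaN : aa (N + 1) = t + T := by
    simp only [haa]
    have h0 : (⟨min (N + 1) (N + 1), by omega⟩ : Fin (N + 2)) = Fin.last (N + 1) := by
      apply Fin.ext; simp [Fin.last]
    rw [h0, hτN]; ring
  have haak1 : ∀ k : Fin (N + 1), aa k.1 = τ k.castSucc + h := by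
    intro k
    simp only [haa]
    congr 2
    apply Fin.ext
    simp only [Fin.coe_castSucc]
    omega
  have haak2 : ∀ k : Fin (N + 1), aa (k.1 + 1) = τ k.succ + h := by
    intro k
    simp only [haa]
    congr 2
    apply Fin.ext
    simp only [Fin.val_succ]
    omega
  -- continuity of the exponential factor
  have hexpc : Continuous (fun s : ℝ => NormedSpace.exp ((t + T - s) • L)) := by
    have heq : (fun s : ℝ => NormedSpace.exp ((t + T - s) • L))
        = fun s => Gs L 0 (t + T - s) := funext fun s => (Gs_zero L _).symm
    rw [heq]
    exact (Gs_continuous L 0).comp (continuous_const.sub continuous_id)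
  set f1 : ℝ → Fin n → ℝ :=
    fun s => NormedSpace.exp ((t + T - s) • L) (Bu.mulVec (u (s - h))) with hf1
  have hgkcont : ∀ k : Fin (N + 1),
      Continuous (fun s => NormedSpace.exp ((t + T - s) • L) (Bu.mulVec (uv k))) :=
    fun k => hexpc.clm_apply continuous_const
  -- a.e. equality on each piece
  have hpieceP : ∀ k : Fin (N + 1), ∀ᵐ s : ℝ ∂volume,
      s ∈ Set.uIoc (τ k.castSucc + h) (τ k.succ + h) →
        f1 s = NormedSpace.exp ((t + T - s) • L) (Bu.mulVec (uv k)) := by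
    intro k
    have hlt : τ k.castSucc + h < τ k.succ + h := by
      have := hτmono (Fin.castSucc_lt_succ : k.castSucc < k.succ); linarith
    have hb : ∀ᵐ s : ℝ ∂volume, s ∉ ({τ k.succ + h} : Set ℝ) :=
      measure_eq_zero_iff_ae_notMem.mp (measure_singleton _)
    filter_upwards [hb] with s hsb hs
    have hne : s ≠ τ k.succ + h := by simpa using hsb
    rw [Set.uIoc_of_le hlt.le] at hs
    have hs1 : τ k.castSucc ≤ s - h := by have := hs.1; linarith
    have hs2 : s - h < τ k.succ := by
      rcases lt_or_eq_of_le hs.2 with h' | h'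
      · linarith
      · exact absurd h' hne
    simp only [hf1, hu k (s - h) hs1 hs2]
  have hpiece : ∀ k : Fin (N + 1),
      f1 =ᵐ[volume.restrict (Set.uIoc (τ k.castSucc + h) (τ k.succ + h))]
        (fun s => NormedSpace.exp ((t + T - s) • L) (Bu.mulVec (uv k))) := by
    intro k
    exact (ae_restrict_iff' measurableSet_uIoc).2 (hpieceP k)
  have hint_piece : ∀ k : Fin (N + 1),
      IntervalIntegrable f1 volume (τ k.castSucc + h) (τ k.succ + h) :=
    fun k => ((hgkcont k).intervalIntegrable _ _).congr_ae (hpiece k).symm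
  have hint_aa : ∀ k < N + 1, IntervalIntegrable f1 volume (aa k) (aa (k + 1)) := by
    intro k hk
    have := hint_piece ⟨k, hk⟩
    rwa [← haak1 ⟨k, hk⟩, ← haak2 ⟨k, hk⟩] at this
  have hint1 : IntervalIntegrable f1 volume t (t + T) := by
    have := IntervalIntegrable.trans_iterate (a := aa) (n := N + 1) hint_aa
    rwa [haa0, haaN] at this
  -- the ω part
  have hBWc : Continuous (fun s : ℝ => Bω.mulVec (ω s)) := by
    have : (fun s : ℝ => Bω.mulVec (ω s))
        = fun s => (LinearMap.toContinuousLinearMap Bω.mulVecLin) (ω s) := rfl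
    rw [this]
    exact (LinearMap.toContinuousLinearMap Bω.mulVecLin).continuous.comp hω.continuous
  have hf2cont : Continuous (fun s => NormedSpace.exp ((t + T - s) • L) (Bω.mulVec (ω s))) :=
    hexpc.clm_apply hBWc
  have hint2 : IntervalIntegrable
      (fun s => NormedSpace.exp ((t + T - s) • L) (Bω.mulVec (ω s))) volume t (t + T) :=
    hf2cont.intervalIntegrable _ _
  -- variation of constants
  have hx' : ∀ s : ℝ, HasDerivAt x
      (A.mulVec (x s) + (Bu.mulVec (u (s - h)) + Bω.mulVec (ω s))) s := by
    intro s; simpa [add_assoc] using hx s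
  have hintg : IntervalIntegrable (fun s => NormedSpace.exp ((t + T - s) • matEc A)
      ((Bu.mulVec (u (s - h)) + Bω.mulVec (ω s)))) volume t (t + T) := by
    have heq : (fun s => NormedSpace.exp ((t + T - s) • matEc A)
        ((Bu.mulVec (u (s - h)) + Bω.mulVec (ω s))))
        = fun s => f1 s + NormedSpace.exp ((t + T - s) • L) (Bω.mulVec (ω s)) :=
      funext fun s => map_add _ _ _
    rw [heq]
    exact hint1.add hint2
  have hvoc := voc A x (fun s => Bu.mulVec (u (s - h)) + Bω.mulVec (ω s)) hx' t T hintg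
  have hsplit : (∫ s in t..(t + T), NormedSpace.exp ((t + T - s) • matEc A)
      ((Bu.mulVec (u (s - h)) + Bω.mulVec (ω s))))
      = (∫ s in t..(t + T), f1 s)
        + ∫ s in t..(t + T), NormedSpace.exp ((t + T - s) • L) (Bω.mulVec (ω s)) := by
    rw [← intervalIntegral.integral_add hint1 hint2]
    exact intervalIntegral.integral_congr fun s _ => map_add _ _ _
  rw [hsplit] at hvoc
  -- the input sum
  have hS1 : (∫ s in t..(t + T), f1 s)
      = ∑ k : Fin (N + 1), ∫ s in (τ k.castSucc + h)..(τ k.succ + h),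
          (NormedSpace.exp ((t + T - s) • A) * Bu).mulVec (uv k) := by
    have hadj := intervalIntegral.sum_integral_adjacent_intervals (a := aa)
      (μ := volume) (f := f1) hint_aa
    rw [haa0, haaN] at hadj
    rw [← hadj, ← Fin.sum_univ_eq_sum_range (fun k => ∫ s in aa k..aa (k + 1), f1 s) (N + 1)]
    refine Finset.sum_congr rfl fun k _ => ?_
    rw [haak1 k, haak2 k]
    have hterm : ∀ s : ℝ, (NormedSpace.exp ((t + T - s) • A) * Bu).mulVec (uv k)
        = NormedSpace.exp ((t + T - s) • L) (Bu.mulVec (uv k)) := by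
      intro s
      rw [← Matrix.mulVec_mulVec, exp_mulVec]
    rw [intervalIntegral.integral_congr (fun s _ => hterm s)]
    exact intervalIntegral.integral_congr_ae (hpieceP k)
  -- the ω expansion
  have hf2eq : (∫ s in t..(t + T), NormedSpace.exp ((t + T - s) • L) (Bω.mulVec (ω s)))
      = ∫ s in t..(t + T), Gs L 0 (t + T - s) (Bω.mulVec (ω s)) :=
    intervalIntegral.integral_congr fun s _ => by rw [Gs_zero]
  have hOE := omega_expand L Bω ω hω t T
  have hSum : ∀ i ∈ Finset.range (r + 1),
      (T ^ (i + 1) / (i + 1).factorial : ℝ) • (Gam A i T * Bω).mulVec (iteratedDeriv i ω t)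
        = Gs L (i + 1) T (Bω.mulVec (iteratedDeriv i ω t)) := by
    intro i _
    rw [← Matrix.mulVec_mulVec, gam_apply]
  have hRem : (∫ s in t..(t + T), ((t + T - s) ^ (r + 1) / (r + 1).factorial : ℝ) •
        (Gam A r (t + T - s) * Bω).mulVec (iteratedDeriv (r + 1) ω s))
      = ∫ s in t..(t + T), Gs L (r + 1) (t + T - s) (Bω.mulVec (iteratedDeriv (r + 1) ω s)) :=
    intervalIntegral.integral_congr fun s _ => by rw [← Matrix.mulVec_mulVec, gam_apply]
  rw [hS1, hf2eq, hOE] at hvoc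
  rw [hvoc, Finset.sum_congr rfl hSum, hRem, exp_mulVec]
  abel
end

section
/- Combining the previous two results: if ė(t) = F e(t) + G w(t), ‖w(t)‖ ≤ ε for all t, and there exist symmetric positive definite P, δ > 0, α > 0 with [[PF + FᵀP + 2δP, PG],[GᵀP, −I]] ⪯ 0 and P ⪰ α KᵀK, then limsup_{t→∞} ‖K e(t)‖ ≤ ε √(1/(2αδ)) for any initial condition e(t_0). -/
open Matrix Filter Real

lemma hasDerivAt_quad {l : ℕ} (P : Matrix (Fin l) (Fin l) ℝ) (e : ℝ → Fin l → ℝ)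
    (e' : Fin l → ℝ) (s : ℝ) (h : HasDerivAt e e' s) :
    HasDerivAt (fun t => e t ⬝ᵥ P.mulVec (e t))
      (e' ⬝ᵥ P.mulVec (e s) + e s ⬝ᵥ P.mulVec e') s := by
  have hcoord : ∀ i, HasDerivAt (fun t => e t i) (e' i) s := hasDerivAt_pi.1 h
  have H : HasDerivAt (fun t => ∑ i, ∑ j, P i j * (e t i * e t j))
      (∑ i, ∑ j, P i j * (e' i * e s j + e s i * e' j)) s := by
    apply HasDerivAt.fun_sum
    intro i _
    apply HasDerivAt.fun_sum
    intro j _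
    exact ((hcoord i).mul (hcoord j)).const_mul (P i j)
  convert H using 1
  · funext t
    simp only [dotProduct, mulVec, Finset.mul_sum]
    refine Finset.sum_congr rfl fun i _ => Finset.sum_congr rfl fun j _ => by ring
  · simp only [dotProduct, mulVec, Finset.mul_sum]
    rw [← Finset.sum_add_distrib]
    refine Finset.sum_congr rfl fun i _ => ?_
    rw [← Finset.sum_add_distrib]
    exact Finset.sum_congr rfl fun j _ => by ring

lemma lmi_key {l q : ℕ} {F : Matrix (Fin l) (Fin l) ℝ} {G : Matrix (Fin l) (Fin q) ℝ}
    {P : Matrix (Fin l) (Fin l) ℝ} {δ : ℝ}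
    (hLMI : (-(Matrix.fromBlocks (P * F + Fᵀ * P + (2 * δ) • P) (P * G)
        (Gᵀ * P) (-1))).PosSemidef)
    (x : Fin l → ℝ) (y : Fin q → ℝ) :
    (F.mulVec x + G.mulVec y) ⬝ᵥ P.mulVec x + x ⬝ᵥ P.mulVec (F.mulVec x + G.mulVec y)
      ≤ -((2 * δ) * (x ⬝ᵥ P.mulVec x)) + y ⬝ᵥ y := by
  have h := hLMI.dotProduct_mulVec_nonneg (Sum.elim x y)
  simp only [star_trivial, neg_mulVec, dotProduct_neg, fromBlocks_mulVec,
    sumElim_dotProduct_sumElim, add_mulVec, smul_mulVec, dotProduct_add,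
    dotProduct_smul, smul_eq_mul, neg_add_rev, ← mulVec_mulVec,
    Sum.elim_comp_inl, Sum.elim_comp_inr, one_mulVec, neg_neg] at h
  have h1 : x ⬝ᵥ Fᵀ *ᵥ (P *ᵥ x) = (F *ᵥ x) ⬝ᵥ (P *ᵥ x) := by
    rw [dotProduct_mulVec, vecMul_transpose]
  have h2 : y ⬝ᵥ Gᵀ *ᵥ (P *ᵥ x) = (G *ᵥ y) ⬝ᵥ (P *ᵥ x) := by
    rw [dotProduct_mulVec, vecMul_transpose]
  simp only [add_mulVec, mulVec_add, dotProduct_add, add_dotProduct] at h ⊢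
  rw [h1, h2] at h
  linarith

/-- Ultimate-bound conclusion of Lemma 2 (Eq. (12)): under the LMI conditions,
`limsup_{t→∞} ‖K e(t)‖ ≤ ε √(1/(2αδ))` for any initial condition (Euclidean norm,
written via dot products). -/
theorem stmt12 {l n q : ℕ} (F : Matrix (Fin l) (Fin l) ℝ) (G : Matrix (Fin l) (Fin q) ℝ)
    (K : Matrix (Fin n) (Fin l) ℝ)
    (e : ℝ → Fin l → ℝ) (w : ℝ → Fin q → ℝ) (ε δ α : ℝ) (hδ : 0 < δ) (hα : 0 < α)
    (hw : ∀ s : ℝ, Real.sqrt (w s ⬝ᵥ w s) ≤ ε)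
    (he : ∀ s : ℝ, HasDerivAt e (F.mulVec (e s) + G.mulVec (w s)) s)
    (P : Matrix (Fin l) (Fin l) ℝ) (hPsymm : P.IsSymm) (hP : P.PosDef)
    (hLMI : (-(Matrix.fromBlocks (P * F + Fᵀ * P + (2 * δ) • P) (P * G)
        (Gᵀ * P) (-1))).PosSemidef)
    (hK : (P - α • (Kᵀ * K)).PosSemidef) :
    Filter.limsup (fun s => Real.sqrt (K.mulVec (e s) ⬝ᵥ K.mulVec (e s))) Filter.atTop ≤
      ε * Real.sqrt (1 / (2 * α * δ)) := by
  have hε : 0 ≤ ε := le_trans (Real.sqrt_nonneg _) (hw 0)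
  set V : ℝ → ℝ := fun s => e s ⬝ᵥ P.mulVec (e s) with hVdef
  have hwsq : ∀ s, w s ⬝ᵥ w s ≤ ε ^ 2 := by
    intro s
    have h0 : (0:ℝ) ≤ w s ⬝ᵥ w s := Finset.sum_nonneg fun i _ => mul_self_nonneg _
    have := Real.sq_sqrt h0
    nlinarith [hw s, Real.sqrt_nonneg (w s ⬝ᵥ w s)]
  set d : ℝ → ℝ := fun s =>
    (F.mulVec (e s) + G.mulVec (w s)) ⬝ᵥ P.mulVec (e s) +
      e s ⬝ᵥ P.mulVec (F.mulVec (e s) + G.mulVec (w s)) with hddef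
  have hV' : ∀ s, HasDerivAt V (d s) s := fun s => hasDerivAt_quad P e _ s (he s)
  have hdle : ∀ s, d s ≤ -((2 * δ) * V s) + ε ^ 2 := fun s =>
    le_trans (lmi_key hLMI (e s) (w s)) (by linarith [hwsq s])
  set C : ℝ := ε ^ 2 / (2 * δ) with hCdef
  set U : ℝ → ℝ := fun s => Real.exp (2 * δ * s) * (V s - C) with hUdef
  set u' : ℝ → ℝ := fun s =>
    Real.exp (2 * δ * s) * (2 * δ) * (V s - C) + Real.exp (2 * δ * s) * d s with hu'def
  have hU : ∀ s, HasDerivAt U (u' s) s := by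
    intro s
    have hexp : HasDerivAt (fun t => Real.exp (2 * δ * t)) (Real.exp (2 * δ * s) * (2 * δ)) s := by
      simpa using ((hasDerivAt_id s).const_mul (2 * δ)).exp
    exact hexp.mul ((hV' s).sub_const C)
  have hu'le : ∀ s, u' s ≤ 0 := by
    intro s
    have h1 := hdle s
    have h2 : (0:ℝ) < Real.exp (2 * δ * s) := Real.exp_pos _
    have hC : 2 * δ * C = ε ^ 2 := by rw [hCdef]; field_simp
    simp only [hu'def]
    nlinarith [mul_le_mul_of_nonneg_left h1 h2.le]
  have hanti : Antitone U := antitone_of_hasDerivAt_nonpos hU hu'le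
  have hVb : ∀ s : ℝ, 0 ≤ s → V s ≤ C + (V 0 - C) * Real.exp (-(2 * δ * s)) := by
    intro s hs
    have h1 : U s ≤ U 0 := hanti hs
    have h2 : U 0 = V 0 - C := by simp [hUdef]
    have h3 := mul_le_mul_of_nonneg_left (h2 ▸ h1) (Real.exp_nonneg (-(2 * δ * s)))
    rw [hUdef] at h3
    simp only at h3
    rw [← mul_assoc, ← Real.exp_add, neg_add_cancel, Real.exp_zero, one_mul] at h3
    linarith
  have hKe : ∀ s, α * (K.mulVec (e s) ⬝ᵥ K.mulVec (e s)) ≤ V s := by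
    intro s
    have h := hK.dotProduct_mulVec_nonneg (e s)
    simp only [star_trivial, sub_mulVec, smul_mulVec, dotProduct_sub,
      dotProduct_smul, smul_eq_mul, ← mulVec_mulVec] at h
    have h1 : e s ⬝ᵥ Kᵀ *ᵥ (K *ᵥ e s) = (K *ᵥ e s) ⬝ᵥ (K *ᵥ e s) := by
      rw [dotProduct_mulVec, vecMul_transpose]
    rw [h1] at h
    simp only [hVdef]
    linarith
  set g : ℝ → ℝ := fun s => Real.sqrt ((C + (V 0 - C) * Real.exp (-(2 * δ * s))) / α)
    with hgdef
  have hfg : ∀ s : ℝ, 0 ≤ s →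
      Real.sqrt (K.mulVec (e s) ⬝ᵥ K.mulVec (e s)) ≤ g s := by
    intro s hs
    apply Real.sqrt_le_sqrt
    rw [le_div_iff₀ hα]
    calc K.mulVec (e s) ⬝ᵥ K.mulVec (e s) * α = α * (K.mulVec (e s) ⬝ᵥ K.mulVec (e s)) := by ring
    _ ≤ V s := hKe s
    _ ≤ _ := hVb s hs
  have hgl : Tendsto g atTop (nhds (Real.sqrt (C / α))) := by
    have h1 : Tendsto (fun s : ℝ => -(2 * δ * s)) atTop atBot := by
      apply tendsto_neg_atTop_atBot.comp
      exact Tendsto.const_mul_atTop (by positivity) tendsto_id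
    have h2 : Tendsto (fun s : ℝ => (C + (V 0 - C) * Real.exp (-(2 * δ * s))) / α) atTop
        (nhds (C / α)) := by
      have := ((Real.tendsto_exp_atBot.comp h1).const_mul (V 0 - C)).const_add C
      simpa using this.div_const α
    exact (Real.continuous_sqrt.continuousAt.tendsto.comp h2)
  have hlim : Filter.limsup (fun s => Real.sqrt (K.mulVec (e s) ⬝ᵥ K.mulVec (e s)))
      Filter.atTop ≤ Real.sqrt (C / α) := by
    have hle : Filter.limsup (fun s => Real.sqrt (K.mulVec (e s) ⬝ᵥ K.mulVec (e s)))
        Filter.atTop ≤ Filter.limsup g Filter.atTop := by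
      apply Filter.limsup_le_limsup
      · filter_upwards [Filter.eventually_ge_atTop (0:ℝ)] with s hs using hfg s hs
      · exact Filter.isCoboundedUnder_le_of_le Filter.atTop fun s => Real.sqrt_nonneg _
      · exact hgl.isBoundedUnder_le
    rw [hgl.limsup_eq] at hle
    exact hle
  have hfin : Real.sqrt (C / α) = ε * Real.sqrt (1 / (2 * α * δ)) := by
    have : C / α = ε ^ 2 * (1 / (2 * α * δ)) := by
      rw [hCdef, div_div, mul_one_div]
      rw [mul_right_comm]
    rw [this, Real.sqrt_mul (sq_nonneg ε), Real.sqrt_sq hε]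
  rwa [hfin] at hlim
end

section
/- Let F ∈ ℝ^{l×l} and suppose there exist a symmetric matrix N, a matrix M (both real, of some size d×d) and a symmetric positive definite P such that N ⊗ P + M ⊗ (PF) + Mᵀ ⊗ (PF)ᵀ ≺ 0. Then every eigenvalue z ∈ ℂ of F satisfies N + zM + z* Mᵀ ≺ 0 (as a complex Hermitian matrix), i.e., z lies in the LMI region D = {z ∈ ℂ : N + zM + z*Mᵀ ≺ 0}. -/
open Matrix Kronecker

/-- A complex matrix is Hermitian negative definite: `Q = Qᴴ` and `vᴴ Q v < 0` for `v ≠ 0`.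
(For a Hermitian `Q`, `vᴴ Q v` is real, so the condition is stated on the real part.) -/
def NegDefC {d : ℕ} (Q : Matrix (Fin d) (Fin d) ℂ) : Prop :=
  Q.IsHermitian ∧ ∀ v : Fin d → ℂ, v ≠ 0 → (star v ⬝ᵥ Q.mulVec v).re < 0

lemma re_quad {n : Type*} (Q : Matrix n n ℝ) [Fintype n] (w : n → ℂ) :
    (star w ⬝ᵥ (Q.map (Complex.ofReal ·)).mulVec w).re
    = (fun i => (w i).re) ⬝ᵥ Q.mulVec (fun i => (w i).re)
      + (fun i => (w i).im) ⬝ᵥ Q.mulVec (fun i => (w i).im) := by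
  simp [dotProduct, mulVec, Finset.mul_sum, Complex.ext_iff, Complex.mul_re, Complex.mul_im]
  rw [← Finset.sum_add_distrib]
  exact Finset.sum_congr rfl fun i _ => Finset.sum_add_distrib

lemma im_quad {n : Type*} (Q : Matrix n n ℝ) [Fintype n] (hQ : Q.IsSymm) (w : n → ℂ) :
    (star w ⬝ᵥ (Q.map (Complex.ofReal ·)).mulVec w).im = 0 := by
  have h : ∀ i j, Q i j = Q j i := fun i j => hQ.apply j i
  simp only [dotProduct, mulVec, Pi.star_apply, map_apply, Complex.star_def,
    Finset.mul_sum, Complex.im_sum, Complex.mul_im]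
  simp [Finset.sum_add_distrib]
  rw [add_neg_eq_zero, Finset.sum_comm]
  refine Finset.sum_congr rfl fun i _ => Finset.sum_congr rfl fun j _ => ?_
  rw [h i j]; ring

lemma quad_kron {d l : Type*} [Fintype d] [Fintype l]
    (A : Matrix d d ℂ) (B : Matrix l l ℂ) (u : d → ℂ) (v : l → ℂ) :
    star (fun p : d × l => u p.1 * v p.2) ⬝ᵥ (A ⊗ₖ B).mulVec (fun p : d × l => u p.1 * v p.2)
    = (star u ⬝ᵥ A.mulVec u) * (star v ⬝ᵥ B.mulVec v) := by
  simp only [dotProduct, mulVec, kroneckerMap_apply, Fintype.sum_prod_type, Pi.star_apply,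
    Complex.star_def]
  rw [Finset.sum_mul_sum]
  refine Finset.sum_congr rfl fun i _ => Finset.sum_congr rfl fun j _ => ?_
  rw [show ((starRingEnd ℂ) (u i) * ∑ k, A i k * u k) * ((starRingEnd ℂ) (v j) * ∑ m, B j m * v m)
      = (starRingEnd ℂ) (u i) * (starRingEnd ℂ) (v j)
        * ((∑ k, A i k * u k) * (∑ m, B j m * v m)) from by ring,
    Finset.sum_mul_sum Finset.univ Finset.univ (fun k => A i k * u k) (fun m => B j m * v m),
    map_mul (starRingEnd ℂ), mul_assoc,
    show (∑ k, ∑ m, A i k * B j m * (u k * v m)) = ∑ k, ∑ m, (A i k * u k) * (B j m * v m) from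
      Finset.sum_congr rfl fun k _ => Finset.sum_congr rfl fun m _ => by ring]
  ring

lemma map_kron {d l : Type*} (A : Matrix d d ℝ) (B : Matrix l l ℝ) :
    (A ⊗ₖ B).map (Complex.ofReal ·) = A.map (Complex.ofReal ·) ⊗ₖ B.map (Complex.ofReal ·) := by
  ext ⟨i, j⟩ ⟨k, m⟩
  simp

lemma map_mulR {l : Type*} [Fintype l] (A B : Matrix l l ℝ) :
    (A * B).map (Complex.ofReal ·) = A.map (Complex.ofReal ·) * B.map (Complex.ofReal ·) := by
  ext i j
  simp [Matrix.mul_apply]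

lemma mulVec_star_real {l : Type*} [Fintype l] (A : Matrix l l ℝ) (v : l → ℂ) :
    (A.map (Complex.ofReal ·)).mulVec (star v) = star ((A.map (Complex.ofReal ·)).mulVec v) := by
  funext i
  simp [mulVec, dotProduct, Complex.star_def, map_sum]

/-- Chilali–Gahinet D-stability: if `N ⊗ P + M ⊗ (PF) + Mᵀ ⊗ (PF)ᵀ ≺ 0` for a symmetric
positive definite `P`, then every (complex) eigenvalue `z` of `F` satisfies
`N + zM + z*Mᵀ ≺ 0` as a complex Hermitian matrix, i.e. `z` lies in the LMI region `D`. -/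
theorem stmt13 {l d : ℕ} (F : Matrix (Fin l) (Fin l) ℝ)
    (N M : Matrix (Fin d) (Fin d) ℝ) (hN : N.IsSymm)
    (P : Matrix (Fin l) (Fin l) ℝ) (hPsymm : P.IsSymm) (hP : P.PosDef)
    (hLMI : ∀ v : (Fin d × Fin l) → ℝ, v ≠ 0 →
      v ⬝ᵥ (N ⊗ₖ P + M ⊗ₖ (P * F) + Mᵀ ⊗ₖ (P * F)ᵀ).mulVec v < 0)
    (z : ℂ)
    (hz : ∃ v : Fin l → ℂ, v ≠ 0 ∧ (F.map (Complex.ofReal ·)).mulVec v = z • v) :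
    NegDefC (N.map (Complex.ofReal ·) + z • M.map (Complex.ofReal ·)
        + (starRingEnd ℂ) z • (M.map (Complex.ofReal ·))ᵀ) := by
  obtain ⟨v, hv, hev⟩ := hz
  set Nc := N.map (Complex.ofReal ·) with hNc
  set Mc := M.map (Complex.ofReal ·) with hMc
  set Pc := P.map (Complex.ofReal ·) with hPc
  set Fc := F.map (Complex.ofReal ·) with hFc
  have hNsymm : ∀ i j, N i j = N j i := fun i j => (hN.apply i j).symm
  constructor
  · -- Hermitian
    ext i j
    simp only [conjTranspose_apply, Matrix.add_apply, Matrix.smul_apply, transpose_apply,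
      map_apply, star_add, star_mul', smul_eq_mul, Complex.star_def, _root_.map_mul,
      Complex.conj_conj, Complex.conj_ofReal, hNc, hMc]
    rw [hNsymm j i]
    ring
  · intro u hu
    -- the Kronecker vector
    set w : Fin d × Fin l → ℂ := fun p => u p.1 * v p.2 with hwdef
    have hwne : w ≠ 0 := by
      obtain ⟨i, hi⟩ := Function.ne_iff.mp hu
      obtain ⟨j, hj⟩ := Function.ne_iff.mp hv
      intro h
      have : w (i, j) = 0 := by rw [h]; rfl
      exact mul_ne_zero (by simpa using hi) (by simpa using hj) this
    set Qr : Matrix (Fin d × Fin l) (Fin d × Fin l) ℝ :=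
      N ⊗ₖ P + M ⊗ₖ (P * F) + Mᵀ ⊗ₖ (P * F)ᵀ with hQr
    -- negative definiteness of Qr over ℂ (real part)
    have hle : ∀ x : (Fin d × Fin l) → ℝ, x ⬝ᵥ Qr.mulVec x ≤ 0 := by
      intro x
      by_cases hx : x = 0
      · simp [hx]
      · exact (hLMI x hx).le
    have hre : (star w ⬝ᵥ (Qr.map (Complex.ofReal ·)).mulVec w).re < 0 := by
      rw [re_quad]
      have hab : (fun i => (w i).re) ≠ 0 ∨ (fun i => (w i).im) ≠ 0 := by
        by_contra h
        push_neg at h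
        apply hwne
        funext p
        have h1 := congrFun h.1 p
        have h2 := congrFun h.2 p
        exact Complex.ext (by simpa using h1) (by simpa using h2)
      rcases hab with ha | hb
      · linarith [hLMI _ ha, hle (fun i => (w i).im)]
      · linarith [hLMI _ hb, hle (fun i => (w i).re)]
    -- expand the quadratic form over the Kronecker structure
    set cP := star v ⬝ᵥ Pc.mulVec v with hcP
    set cN := star u ⬝ᵥ Nc.mulVec u with hcN
    set cM := star u ⬝ᵥ Mc.mulVec u with hcM
    set cMt := star u ⬝ᵥ (Mᵀ.map (Complex.ofReal ·)).mulVec u with hcMt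
    have hPcsymm : Pcᵀ = Pc := by
      rw [hPc, ← Matrix.transpose_map, hPsymm]
    have hPF : star v ⬝ᵥ ((P * F).map (Complex.ofReal ·)).mulVec v = z * cP := by
      rw [map_mulR, ← hPc, ← hFc, ← Matrix.mulVec_mulVec, hev, Matrix.mulVec_smul,
        dotProduct_smul, smul_eq_mul]
    have hFstar : Fc.mulVec (star v) = star (Fc.mulVec v) := mulVec_star_real F v
    have hPFt : star v ⬝ᵥ (((P * F)ᵀ).map (Complex.ofReal ·)).mulVec v
        = (starRingEnd ℂ) z * cP := by
      rw [Matrix.transpose_map, map_mulR, ← hPc, ← hFc, Matrix.transpose_mul, hPcsymm,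
        ← Matrix.mulVec_mulVec, Matrix.dotProduct_mulVec, Matrix.vecMul_transpose, hFstar,
        hev, star_smul, smul_dotProduct, smul_eq_mul]
      rfl
    have hquad : star w ⬝ᵥ (Qr.map (Complex.ofReal ·)).mulVec w
        = cP * (cN + z * cM + (starRingEnd ℂ) z * cMt) := by
      rw [hQr, Matrix.map_add, Matrix.map_add, map_kron, map_kron, map_kron,
        Matrix.add_mulVec, Matrix.add_mulVec, dotProduct_add, dotProduct_add]
      rw [hwdef]
      rw [quad_kron, quad_kron, quad_kron, ← hNc, ← hMc, hPF, hPFt, ← hcN, ← hcM, ← hcMt, ← hcP]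
      · ring
      all_goals exact fun a b => by push_cast; ring
    -- cP is real and positive
    have hcPim : cP.im = 0 := im_quad P hPsymm v
    have hcPre : 0 < cP.re := by
      rw [hcP, re_quad]
      have hab : (fun i => (v i).re) ≠ 0 ∨ (fun i => (v i).im) ≠ 0 := by
        by_contra h
        push_neg at h
        apply hv
        funext p
        exact Complex.ext (by simpa using congrFun h.1 p) (by simpa using congrFun h.2 p)
      have hge : ∀ x : Fin l → ℝ, 0 ≤ x ⬝ᵥ P.mulVec x := by
        intro x
        have := hP.posSemidef.dotProduct_mulVec_nonneg x
        simpa using this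
      have hgt : ∀ x : Fin l → ℝ, x ≠ 0 → 0 < x ⬝ᵥ P.mulVec x := by
        intro x hx
        have := hP.dotProduct_mulVec_pos hx
        simpa using this
      rcases hab with ha | hb
      · exact add_pos_of_pos_of_nonneg (hgt _ ha) (hge _)
      · exact add_pos_of_nonneg_of_pos (hge _) (hgt _ hb)
    -- the target quadratic form
    have htarget : star u ⬝ᵥ (Nc + z • Mc + (starRingEnd ℂ) z • Mcᵀ).mulVec u
        = cN + z * cM + (starRingEnd ℂ) z * cMt := by
      rw [Matrix.add_mulVec, Matrix.add_mulVec, dotProduct_add, dotProduct_add,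
        Matrix.smul_mulVec, Matrix.smul_mulVec, dotProduct_smul, dotProduct_smul,
        smul_eq_mul, smul_eq_mul, hMc, ← Matrix.transpose_map, ← hcN, ← hcM, ← hcMt]
    rw [htarget] at *
    -- conclude
    rw [hquad, Complex.mul_re, hcPim, zero_mul, sub_zero] at hre
    by_contra hcon
    push_neg at hcon
    nlinarith
end

section
/- Given a symmetric matrix N, matrix M, with D = {z ∈ ℂ : N + zM + z*Mᵀ ≺ 0} equal to the open disk of radius R centered at the origin (achieved with N = [[−R, 0],[0, −R]], M = [[0, 1],[0, 0]]), the condition N ⊗ P + M ⊗ (PF) + Mᵀ ⊗ (PF)ᵀ ≺ 0 for some P ≻ 0 holds if and only if all eigenvalues of F lie in the open disk |z| < R. -/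
open Matrix Kronecker Complex Filter
open scoped ComplexOrder ENNReal NNReal
open scoped ComplexOrder

lemma quad_ofReal {n : Type*} [Fintype n] {A : Matrix n n ℝ} (hA : Aᵀ = A) (w : n → ℂ) :
    star w ⬝ᵥ (A.map (Complex.ofReal ·)) *ᵥ w =
      Complex.ofReal ((fun i => (w i).re) ⬝ᵥ A *ᵥ (fun i => (w i).re)
        + (fun i => (w i).im) ⬝ᵥ A *ᵥ (fun i => (w i).im)) := by
  have expand : star w ⬝ᵥ (A.map (Complex.ofReal ·)) *ᵥ w
      = ∑ i, ∑ j, (A i j : ℂ) * (starRingEnd ℂ (w i) * w j) := by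
    simp only [dotProduct, mulVec, Matrix.map_apply, Finset.mul_sum, Pi.star_apply,
      RCLike.star_def]
    exact Finset.sum_congr rfl fun i _ => Finset.sum_congr rfl fun j _ => by ring
  rw [expand]
  apply Complex.ext
  · simp only [Complex.re_sum, Complex.re_ofReal_mul, Complex.mul_re, Complex.conj_re,
      Complex.conj_im, Complex.ofReal_re, dotProduct, mulVec, Finset.mul_sum]
    rw [← Finset.sum_add_distrib]
    refine Finset.sum_congr rfl fun i _ => ?_
    rw [← Finset.sum_add_distrib]
    refine Finset.sum_congr rfl fun j _ => by simp [Complex.ofReal_im]; ring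
  · simp only [Complex.im_sum, Complex.mul_im, Complex.ofReal_re, Complex.ofReal_im,
      Complex.mul_re, Complex.mul_im, Complex.conj_re, Complex.conj_im, Complex.ofReal_im]
    have h1 : ∀ i j : n, A i j * (starRingEnd ℂ (w i) * w j).im
        = A i j * ((w i).re * (w j).im) - A i j * ((w i).im * (w j).re) := by
      intro i j
      simp [Complex.mul_im]
      ring
    calc (∑ i, ∑ j, (A i j * (starRingEnd ℂ (w i) * w j).im + 0 * (starRingEnd ℂ (w i) * w j).re))
        = ∑ i, ∑ j, (A i j * ((w i).re * (w j).im) - A i j * ((w i).im * (w j).re)) := by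
          refine Finset.sum_congr rfl fun i _ => Finset.sum_congr rfl fun j _ => by
            rw [zero_mul, add_zero, h1]
      _ = (∑ i, ∑ j, A i j * ((w i).re * (w j).im)) - ∑ i, ∑ j, A i j * ((w i).im * (w j).re) := by
          rw [← Finset.sum_sub_distrib]
          exact Finset.sum_congr rfl fun i _ => by rw [← Finset.sum_sub_distrib]
      _ = 0 := by
          rw [sub_eq_zero]
          rw [Finset.sum_comm]
          refine Finset.sum_congr rfl fun i _ => Finset.sum_congr rfl fun j _ => ?_
          have : A j i = A i j := congrFun (congrFun hA i) j
          rw [this]; ring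

lemma realdot_pos {n : Type*} [Fintype n] {v : n → ℝ} (hv : v ≠ 0) : 0 < v ⬝ᵥ v := by
  have := Matrix.dotProduct_self_star_pos_iff (v := v).2 hv
  simpa using this

lemma posdef_ofReal {n : Type*} [Fintype n] {A : Matrix n n ℝ} (hA : A.PosDef) :
    (A.map (Complex.ofReal ·)).PosDef := by
  have hsymm : Aᵀ = A := hA.1
  rw [Matrix.posDef_iff_dotProduct_mulVec]
  constructor
  · ext i j
    simp [Matrix.conjTranspose_apply, Matrix.map_apply, Complex.conj_ofReal]
    have := congrFun (congrFun hsymm i) j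
    simpa [Matrix.transpose_apply] using this
  · intro w hw
    rw [quad_ofReal hsymm w]
    set a : n → ℝ := fun i => (w i).re with ha
    set b : n → ℝ := fun i => (w i).im with hb
    have hab : a ≠ 0 ∨ b ≠ 0 := by
      by_contra h
      push_neg at h
      apply hw
      funext i
      have h1 : a i = 0 := by rw [h.1]; rfl
      have h2 : b i = 0 := by rw [h.2]; rfl
      have := Complex.re_add_im (w i)
      rw [ha] at h1; rw [hb] at h2
      simp only at h1 h2
      apply Complex.ext <;> simp [h1, h2]
    have hpos : 0 < a ⬝ᵥ A *ᵥ a + b ⬝ᵥ A *ᵥ b := by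
      rcases hab with h | h
      · have := hA.dotProduct_mulVec_pos h
        have h2 := hA.posSemidef.dotProduct_mulVec_nonneg b
        simp only [star_trivial] at *
        have : 0 < a ⬝ᵥ A *ᵥ a := by simpa using hA.dotProduct_mulVec_pos h
        have h2' : 0 ≤ b ⬝ᵥ A *ᵥ b := by simpa using h2
        linarith
      · have : 0 < b ⬝ᵥ A *ᵥ b := by simpa using hA.dotProduct_mulVec_pos h
        have h2' : 0 ≤ a ⬝ᵥ A *ᵥ a := by simpa using hA.posSemidef.dotProduct_mulVec_nonneg a
        linarith
    rw [show ((0:ℂ)) = ((0:ℝ):ℂ) by norm_num]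
    exact_mod_cast hpos
open scoped ComplexOrder ENNReal NNReal

section Gelfand
attribute [local instance] Matrix.linftyOpNormedRing Matrix.linftyOpNormedAlgebra

lemma entry_le_norm {n : ℕ} (A : Matrix (Fin n) (Fin n) ℂ) (i j : Fin n) :
    ‖A i j‖₊ ≤ ‖A‖₊ := by
  rw [Matrix.linfty_opNNNorm_def]
  exact le_trans (Finset.single_le_sum (f := fun j => ‖A i j‖₊)
    (fun _ _ => zero_le) (Finset.mem_univ j))
    (Finset.le_sup (f := fun i => ∑ j, ‖A i j‖₊) (Finset.mem_univ i))

lemma entryBound {n : ℕ} (A : Matrix (Fin n) (Fin n) ℂ)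
    (h : ∀ z ∈ spectrum ℂ A, ‖z‖₊ < 1) :
    ∃ C : ℝ, 0 < C ∧ ∃ r : ℝ, 0 ≤ r ∧ r < 1 ∧
      ∀ k (i j : Fin n), ‖(A ^ k) i j‖ ≤ C * r ^ k := by
  have hrad : spectralRadius ℂ A < 1 := by
    rcases Set.eq_empty_or_nonempty (spectrum ℂ A) with he | hne
    · rw [spectralRadius]
      simp [he]
    · have := spectrum.spectralRadius_lt_of_forall_lt_of_nonempty hne (r := 1) h
      simpa using this
  -- pick r between
  obtain ⟨r, hr1, hr2⟩ := ENNReal.lt_iff_exists_nnreal_btwn.mp hrad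
  have hrlt1 : (r : ℝ) < 1 := by exact_mod_cast hr2
  have hrpos : 0 < (r : ℝ) := by
    have : (0 : ℝ≥0∞) ≤ spectralRadius ℂ A := zero_le
    have := lt_of_le_of_lt this hr1
    exact_mod_cast this
  -- Gelfand
  have hgel := spectrum.pow_nnnorm_pow_one_div_tendsto_nhds_spectralRadius A
  have hev : ∀ᶠ m : ℕ in atTop, (‖A ^ m‖₊ : ℝ≥0∞) ^ (1 / (m:ℝ)) < r :=
    hgel.eventually_lt_const hr1
  obtain ⟨m, hm⟩ := (hev.and (eventually_ge_atTop 1)).exists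
  obtain ⟨hm1, hm2⟩ := hm
  have hmne : (m : ℝ) ≠ 0 := by positivity
  have hAm : ‖A ^ m‖₊ < r ^ m := by
    have h1 : ((‖A ^ m‖₊ : ℝ≥0∞) ^ (1 / (m:ℝ))) ^ (m : ℝ) < (r : ℝ≥0∞) ^ (m:ℝ) := by
      apply ENNReal.rpow_lt_rpow hm1 (by positivity)
    rw [← ENNReal.rpow_mul, one_div, inv_mul_cancel₀ hmne, ENNReal.rpow_one] at h1
    rw [ENNReal.rpow_natCast] at h1
    exact_mod_cast h1
  have hAm' : ‖A ^ m‖ < (r:ℝ) ^ m := by exact_mod_cast hAm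
  -- constants
  set D : ℝ := (∑ s ∈ Finset.range m, ‖A ^ s‖) + 1 with hD
  have hDpos : 0 < D := by
    have : 0 ≤ ∑ s ∈ Finset.range m, ‖A ^ s‖ :=
      Finset.sum_nonneg fun _ _ => norm_nonneg _
    linarith
  refine ⟨D / r ^ m, by positivity, r, le_of_lt hrpos, hrlt1, ?_⟩
  intro k i j
  obtain ⟨q, s, hs, hk⟩ : ∃ q s, s < m ∧ k = m * q + s :=
    ⟨k / m, k % m, Nat.mod_lt _ (by omega), (Nat.div_add_mod k m).symm⟩
  have h3 : ‖A ^ s‖ ≤ D := by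
    rw [hD]
    have : ‖A ^ s‖ ≤ ∑ s ∈ Finset.range m, ‖A ^ s‖ :=
      Finset.single_le_sum (f := fun s => ‖A ^ s‖) (fun _ _ => norm_nonneg _)
        (Finset.mem_range.mpr hs)
    linarith
  have h1 : ‖A ^ k‖ ≤ ‖A ^ m‖ ^ q * ‖A ^ s‖ := by
    rcases Nat.eq_zero_or_pos q with hq | hq
    · subst hq
      simp only [pow_zero, one_mul]
      rw [hk]; simp
    · rw [hk, pow_add, pow_mul]
      exact (norm_mul_le _ _).trans
        (mul_le_mul_of_nonneg_right (norm_pow_le' _ hq) (norm_nonneg _))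
  have h2 : ‖A ^ m‖ ^ q ≤ ((r:ℝ) ^ m) ^ q :=
    pow_le_pow_left₀ (norm_nonneg _) (le_of_lt hAm') q
  have hrm : (0:ℝ) < (r:ℝ) ^ m := by positivity
  have hrs : (r:ℝ) ^ m ≤ (r:ℝ) ^ s :=
    pow_le_pow_of_le_one hrpos.le hrlt1.le (le_of_lt hs)
  have key : ((r:ℝ) ^ m) ^ q * D ≤ D / (r:ℝ) ^ m * (r:ℝ) ^ k := by
    rw [hk, pow_add, pow_mul, div_mul_eq_mul_div, le_div_iff₀ hrm]
    have hq0 : (0:ℝ) ≤ ((r:ℝ) ^ m) ^ q := pow_nonneg (pow_nonneg hrpos.le m) q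
    nlinarith [mul_le_mul_of_nonneg_left hrs (mul_nonneg hq0 hDpos.le)]
  have hAk : ‖A ^ k‖ ≤ D / (r:ℝ) ^ m * (r:ℝ) ^ k := by
    calc ‖A ^ k‖ ≤ ‖A ^ m‖ ^ q * ‖A ^ s‖ := h1
      _ ≤ ((r:ℝ) ^ m) ^ q * D := by
          apply mul_le_mul h2 h3 (norm_nonneg _) (by positivity)
      _ ≤ _ := key
  calc ‖(A ^ k) i j‖ ≤ ‖A ^ k‖ := by
        exact_mod_cast entry_le_norm (A ^ k) i j
    _ ≤ _ := hAk
end Gelfand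
open scoped ComplexOrder Kronecker

lemma spec_to_eig {n : ℕ} (A : Matrix (Fin n) (Fin n) ℂ) {z : ℂ}
    (hz : z ∈ spectrum ℂ A) : ∃ v : Fin n → ℂ, v ≠ 0 ∧ A *ᵥ v = z • v := by
  rw [spectrum.mem_iff] at hz
  have hdet : (algebraMap ℂ (Matrix (Fin n) (Fin n) ℂ) z - A).det = 0 := by
    by_contra h
    exact hz ((Matrix.isUnit_iff_isUnit_det _).mpr (isUnit_iff_ne_zero.mpr h))
  obtain ⟨v, hv0, hv⟩ := (Matrix.exists_mulVec_eq_zero_iff).mpr hdet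
  refine ⟨v, hv0, ?_⟩
  rw [Algebra.algebraMap_eq_smul_one, Matrix.sub_mulVec, Matrix.smul_mulVec,
    Matrix.one_mulVec, sub_eq_zero] at hv
  exact hv.symm

/-- block quadratic form lemma -/
lemma blockQuad {l : ℕ} {K : Type*} [CommRing K] [StarRing K]
    (Q E : Matrix (Fin l) (Fin l) K) (R' : K)
    (T : Matrix (Fin 2 × Fin l) (Fin 2 × Fin l) K)
    (h00 : ∀ a b, T (0,a) (0,b) = R' * Q a b)
    (h01 : ∀ a b, T (0,a) (1,b) = -(E a b))
    (h10 : ∀ a b, T (1,a) (0,b) = -(E b a))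
    (h11 : ∀ a b, T (1,a) (1,b) = R' * Q a b)
    (w1 w2 : Fin l → K) :
    star (fun p : Fin 2 × Fin l => if p.1 = 0 then w1 p.2 else w2 p.2) ⬝ᵥ
      T *ᵥ (fun p : Fin 2 × Fin l => if p.1 = 0 then w1 p.2 else w2 p.2) =
      R' * (star w1 ⬝ᵥ Q *ᵥ w1) + R' * (star w2 ⬝ᵥ Q *ᵥ w2)
        - star w1 ⬝ᵥ E *ᵥ w2 - star w2 ⬝ᵥ Eᵀ *ᵥ w1 := by
  simp only [dotProduct, mulVec, Pi.star_apply, Fintype.sum_prod_type, Fin.sum_univ_two]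
  simp only [if_pos rfl, if_neg (by decide : ¬ ((1:Fin 2) = 0)), ite_true]
  simp only [h00, h01, h10, h11, Matrix.transpose_apply]
  simp only [Finset.mul_sum, mul_add, mul_neg, neg_mul, Finset.sum_add_distrib,
    Finset.sum_neg_distrib, sub_eq_add_neg, neg_neg, neg_add, ite_true]
  have comm : ∀ (c d : Fin l → K), (∑ x, ∑ y, star (c x) * (R' * Q x y * d y))
      = ∑ x, ∑ y, R' * (star (c x) * (Q x y * d y)) := fun c d =>
    Finset.sum_congr rfl fun x _ => Finset.sum_congr rfl fun y _ => by ring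
  rw [comm, comm]
  abel

lemma realdot_nonneg {n : ℕ} (v : Fin n → ℝ) : 0 ≤ v ⬝ᵥ v :=
  Finset.sum_nonneg fun i _ => mul_self_nonneg _

lemma lyap {l : ℕ} (B : Matrix (Fin l) (Fin l) ℝ) (C r : ℝ) (hC : 0 < C) (hr0 : 0 ≤ r)
    (hr1 : r < 1) (hB : ∀ k (i j : Fin l), |(B ^ k) i j| ≤ C * r ^ k) :
    (∀ x y : Fin l → ℝ, Summable (fun k => (B ^ k *ᵥ x) ⬝ᵥ (B ^ k *ᵥ y))) ∧
    ∃ P : Matrix (Fin l) (Fin l) ℝ, P.IsSymm ∧ P.PosDef ∧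
      ∀ x y : Fin l → ℝ, x ⬝ᵥ P *ᵥ y = ∑' k, (B ^ k *ᵥ x) ⬝ᵥ (B ^ k *ᵥ y) := by
  -- summability of the scalar series
  have hsum : ∀ x y : Fin l → ℝ, Summable (fun k => (B ^ k *ᵥ x) ⬝ᵥ (B ^ k *ᵥ y)) := by
    intro x y
    set X := ∑ a, |x a| with hX
    set Y := ∑ a, |y a| with hY
    have hXnn : 0 ≤ X := Finset.sum_nonneg fun _ _ => abs_nonneg _
    have hYnn : 0 ≤ Y := Finset.sum_nonneg fun _ _ => abs_nonneg _
    have hvec : ∀ k (m : Fin l) (w : Fin l → ℝ) (W : ℝ), (W = ∑ a, |w a|) →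
        |(B ^ k *ᵥ w) m| ≤ C * r ^ k * W := by
      intro k m w W hW
      calc |(B ^ k *ᵥ w) m| = |∑ j, (B ^ k) m j * w j| := rfl
        _ ≤ ∑ j, |(B ^ k) m j * w j| := Finset.abs_sum_le_sum_abs _ _
        _ ≤ ∑ j, C * r ^ k * |w j| := by
            refine Finset.sum_le_sum fun j _ => ?_
            rw [abs_mul]
            exact mul_le_mul_of_nonneg_right (hB k m j) (abs_nonneg _)
        _ = C * r ^ k * W := by rw [hW, Finset.mul_sum]
    apply Summable.of_norm_bounded
      (g := fun k => (l * (C * C * (X * Y))) * (r ^ 2) ^ k)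
      (((summable_geometric_of_lt_one (by positivity) (by nlinarith)).mul_left _))
    intro k
    rw [Real.norm_eq_abs]
    calc |(B ^ k *ᵥ x) ⬝ᵥ (B ^ k *ᵥ y)| ≤ ∑ m, |(B ^ k *ᵥ x) m * (B ^ k *ᵥ y) m| :=
          Finset.abs_sum_le_sum_abs _ _
      _ ≤ ∑ _m : Fin l, (C * r ^ k * X) * (C * r ^ k * Y) := by
          refine Finset.sum_le_sum fun m _ => ?_
          rw [abs_mul]
          exact mul_le_mul (hvec k m x X hX) (hvec k m y Y hY) (abs_nonneg _) (by positivity)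
      _ = (l * (C * C * (X * Y))) * (r ^ 2) ^ k := by
          rw [Finset.sum_const, Finset.card_univ, Fintype.card_fin, nsmul_eq_mul]
          ring_nf
    -- define P
  set g : ℕ → Matrix (Fin l) (Fin l) ℝ := fun k => ((B ^ k)ᵀ * (B ^ k)) with hg
  have hgsymm : ∀ k a b, g k a b = g k b a := by
    intro k a b
    simp only [hg, Matrix.mul_apply, Matrix.transpose_apply]
    exact Finset.sum_congr rfl fun m _ => by ring
  have hgdot : ∀ k (a b : Fin l), g k a b
      = (B ^ k *ᵥ Pi.single a 1) ⬝ᵥ (B ^ k *ᵥ Pi.single b 1) := by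
    intro k a b
    simp only [hg, Matrix.mul_apply, Matrix.transpose_apply, dotProduct, Matrix.mulVec_single,
      mul_one, MulOpposite.op_one, one_smul, Matrix.col_apply]
  have hgsum : ∀ a b, Summable (fun k => g k a b) := by
    intro a b
    simpa only [← hgdot] using hsum (Pi.single a 1) (Pi.single b 1)
  set P : Matrix (Fin l) (Fin l) ℝ := Matrix.of (fun a b => ∑' k, g k a b) with hP
  have hbil : ∀ x y : Fin l → ℝ, x ⬝ᵥ P *ᵥ y = ∑' k, (B ^ k *ᵥ x) ⬝ᵥ (B ^ k *ᵥ y) := by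
    intro x y
    have hsummul : ∀ a b, Summable (fun k => x a * (g k a b * y b)) := by
      intro a b
      exact ((hgsum a b).mul_right _).mul_left _
    calc x ⬝ᵥ P *ᵥ y = ∑ a, ∑ b, x a * ((∑' k, g k a b) * y b) := by
          simp only [dotProduct, mulVec, hP, Matrix.of_apply, Finset.mul_sum]
      _ = ∑ a, ∑ b, ∑' k, x a * (g k a b * y b) := by
          refine Finset.sum_congr rfl fun a _ => Finset.sum_congr rfl fun b _ => ?_
          rw [← tsum_mul_right, ← tsum_mul_left]
      _ = ∑' k, ∑ a, ∑ b, x a * (g k a b * y b) := by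
          rw [eq_comm]
          rw [Summable.tsum_finsetSum (f := fun a k => ∑ b, x a * (g k a b * y b)) (fun a _ => summable_sum fun b _ => hsummul a b)]
          refine Finset.sum_congr rfl fun a _ => ?_
          rw [Summable.tsum_finsetSum (fun b _ => hsummul a b)]
      _ = ∑' k, (B ^ k *ᵥ x) ⬝ᵥ (B ^ k *ᵥ y) := by
          refine tsum_congr fun k => ?_
          have : x ⬝ᵥ (g k) *ᵥ y = ∑ a, ∑ b, x a * (g k a b * y b) := by
            simp only [dotProduct, mulVec, Finset.mul_sum]
          rw [← this, hg]
          rw [← Matrix.mulVec_mulVec, Matrix.dotProduct_mulVec, Matrix.vecMul_transpose]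
  refine ⟨hsum, P, ?_, ?_, hbil⟩
  · -- IsSymm
    ext a b
    simp only [Matrix.transpose_apply, hP, Matrix.of_apply]
    exact tsum_congr fun k => hgsymm k b a
  · rw [Matrix.posDef_iff_dotProduct_mulVec]
    constructor
    · ext a b
      simp only [Matrix.conjTranspose_apply, star_trivial, Matrix.transpose_apply, hP,
        Matrix.of_apply]
      exact tsum_congr fun k => hgsymm k b a
    · intro x hx
      have h0 : x ⬝ᵥ x ≤ x ⬝ᵥ P *ᵥ x := by
        rw [hbil x x]
        have := Summable.le_tsum (hsum x x) 0 (fun k _ => realdot_nonneg _)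
        simpa using this
      have hpos : 0 < x ⬝ᵥ x := by
        rcases (Matrix.dotProduct_self_star_pos_iff (v := x)).2 hx with h
        simpa using h
      simp only [star_trivial]
      linarith

lemma mapC_mul {l : ℕ} (P Q : Matrix (Fin l) (Fin l) ℝ) :
    (P * Q).map (Complex.ofReal ·) = P.map (Complex.ofReal ·) * Q.map (Complex.ofReal ·) := by
  ext i j
  simp only [Matrix.map_apply, Matrix.mul_apply]
  push_cast
  rfl

lemma mapC_pow {l : ℕ} (A : Matrix (Fin l) (Fin l) ℝ) :
    ∀ k, (A.map (Complex.ofReal ·)) ^ k = (A ^ k).map (Complex.ofReal ·)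
  | 0 => by
    ext i j
    simp [Matrix.map_apply, Matrix.one_apply, apply_ite]
  | (k+1) => by
    rw [pow_succ, pow_succ, mapC_pow A k, ← mapC_mul]

lemma transpose_quad {n : ℕ} (E : Matrix (Fin n) (Fin n) ℝ) (v : Fin n → ℂ) :
    star v ⬝ᵥ ((E.map (Complex.ofReal ·))ᵀ) *ᵥ v
      = starRingEnd ℂ (star v ⬝ᵥ (E.map (Complex.ofReal ·)) *ᵥ v) := by
  have h1 : star v ⬝ᵥ ((E.map (Complex.ofReal ·))ᵀ) *ᵥ v
      = ∑ a, ∑ b, star (v a) * ((E b a : ℂ) * v b) := by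
    simp only [dotProduct, mulVec, Pi.star_apply, Matrix.transpose_apply, Matrix.map_apply,
      Finset.mul_sum]
  have h2 : starRingEnd ℂ (star v ⬝ᵥ (E.map (Complex.ofReal ·)) *ᵥ v)
      = ∑ a, ∑ b, v a * ((E a b : ℂ) * star (v b)) := by
    simp only [dotProduct, mulVec, Pi.star_apply, Matrix.map_apply, Finset.mul_sum,
      _root_.map_sum, _root_.map_mul, Complex.conj_ofReal, RCLike.star_def, Complex.conj_conj]
  rw [h1, h2, Finset.sum_comm]
  exact Finset.sum_congr rfl fun a _ => Finset.sum_congr rfl fun b _ => by ring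

/-- For the LMI region given by the open disk of radius `R` (with `N = [[−R,0],[0,−R]]`,
`M = [[0,1],[0,0]]`), the condition `N ⊗ P + M ⊗ (PF) + Mᵀ ⊗ (PF)ᵀ ≺ 0` for some symmetric
`P ≻ 0` holds iff all eigenvalues of `F` lie in the open disk `|z| < R`. -/
theorem stmt19 {l : ℕ} (F : Matrix (Fin l) (Fin l) ℝ) (R : ℝ) (hR : 0 < R)
    (N M : Matrix (Fin 2) (Fin 2) ℝ)
    (hN : N = !![-R, 0; 0, -R]) (hM : M = !![0, 1; 0, 0]) :
    (∃ P : Matrix (Fin l) (Fin l) ℝ,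
        P.IsSymm ∧ P.PosDef ∧
          (-(N ⊗ₖ P + M ⊗ₖ (P * F) + Mᵀ ⊗ₖ (P * F)ᵀ)).PosDef) ↔
      ∀ z : ℂ,
        (∃ v : Fin l → ℂ, v ≠ 0 ∧ (F.map (Complex.ofReal ·)).mulVec v = z • v) →
          ‖z‖ < R := by
  subst hN hM
  constructor
  · rintro ⟨P, hPsymm, hPpd, hSpd⟩ z ⟨v, hv, hzv⟩
    by_cases hz : z = 0
    · subst hz; simpa using hR
    set S : Matrix (Fin 2 × Fin l) (Fin 2 × Fin l) ℝ :=
      -((!![-R, 0; 0, -R]) ⊗ₖ P + (!![0, 1; 0, 0]) ⊗ₖ (P * F) + (!![0, 1; 0, 0])ᵀ ⊗ₖ (P * F)ᵀ)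
      with hSdef
    have hS00 : ∀ a b, S (0,a) (0,b) = R * P a b := by
      intro a b
      simp only [hSdef, Matrix.neg_apply, Matrix.add_apply, Matrix.kroneckerMap_apply,
        Matrix.transpose_apply]
      norm_num [Matrix.cons_val_zero, Matrix.cons_val_one, Matrix.head_cons]
    have hS01 : ∀ a b, S (0,a) (1,b) = -((P * F) a b) := by
      intro a b
      simp only [hSdef, Matrix.neg_apply, Matrix.add_apply, Matrix.kroneckerMap_apply,
        Matrix.transpose_apply]
      norm_num [Matrix.cons_val_zero, Matrix.cons_val_one, Matrix.head_cons]
    have hS10 : ∀ a b, S (1,a) (0,b) = -((P * F) b a) := by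
      intro a b
      simp only [hSdef, Matrix.neg_apply, Matrix.add_apply, Matrix.kroneckerMap_apply,
        Matrix.transpose_apply]
      norm_num [Matrix.cons_val_zero, Matrix.cons_val_one, Matrix.head_cons]
    have hS11 : ∀ a b, S (1,a) (1,b) = R * P a b := by
      intro a b
      simp only [hSdef, Matrix.neg_apply, Matrix.add_apply, Matrix.kroneckerMap_apply,
        Matrix.transpose_apply]
      norm_num [Matrix.cons_val_zero, Matrix.cons_val_one, Matrix.head_cons]
    -- complexification
    set Pc := P.map (Complex.ofReal ·) with hPcdef
    set Ec := (P * F).map (Complex.ofReal ·) with hEcdef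
    set Sc := S.map (Complex.ofReal ·) with hScdef
    have hPcPD : Pc.PosDef := by rw [hPcdef]; exact posdef_ofReal (A := P) hPpd
    have hScPD : Sc.PosDef := by rw [hScdef]; exact posdef_ofReal (A := S) hSpd
    have e00 : ∀ a b, Sc (0,a) (0,b) = (R : ℂ) * Pc a b := by
      intro a b
      simp only [hScdef, hPcdef, Matrix.map_apply, hS00 a b, Complex.ofReal_mul]
    have e01 : ∀ a b, Sc (0,a) (1,b) = -(Ec a b) := by
      intro a b
      simp only [hScdef, hEcdef, Matrix.map_apply, hS01 a b, Complex.ofReal_neg]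
    have e10 : ∀ a b, Sc (1,a) (0,b) = -(Ec b a) := by
      intro a b
      simp only [hScdef, hEcdef, Matrix.map_apply, hS10 a b, Complex.ofReal_neg]
    have e11 : ∀ a b, Sc (1,a) (1,b) = (R : ℂ) * Pc a b := by
      intro a b
      simp only [hScdef, hPcdef, Matrix.map_apply, hS11 a b, Complex.ofReal_mul]
    set w1 : Fin l → ℂ := ((‖z‖ : ℂ)) • v with hw1
    set w2 : Fin l → ℂ := (starRingEnd ℂ z) • v with hw2
    have hquad := blockQuad Pc Ec (R : ℂ) Sc e00 e01 e10 e11 w1 w2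
    -- nonzero vector
    obtain ⟨a0, ha0⟩ : ∃ a, v a ≠ 0 := by
      by_contra h
      push_neg at h
      exact hv (funext fun a => h a)
    have habs : (0:ℝ) < ‖z‖ := norm_pos_iff.mpr hz
    have hu0 : (fun p : Fin 2 × Fin l => if p.1 = 0 then w1 p.2 else w2 p.2) ≠ 0 := by
      intro h
      have := congrFun h (0, a0)
      simp only [hw1, Pi.smul_apply, smul_eq_mul, Pi.zero_apply, if_pos rfl] at this
      rcases mul_eq_zero.mp this with h1 | h1
      · rw [Complex.ofReal_eq_zero] at h1
        exact absurd h1 (ne_of_gt habs)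
      · exact ha0 h1
    have hpos := hScPD.re_dotProduct_pos hu0
    rw [hquad] at hpos
    -- evaluate the four dot products
    have hPsymm' : Pᵀ = P := hPsymm
    obtain ⟨pr, hp⟩ : ∃ pr : ℝ, star v ⬝ᵥ Pc *ᵥ v = (pr : ℂ) :=
      ⟨_, quad_ofReal hPsymm' v⟩
    have hre : 0 < pr := by
      have := hPcPD.re_dotProduct_pos hv
      rw [hp] at this
      simpa using this
    have heig : (F.map (Complex.ofReal ·)) *ᵥ v = z • v := hzv
    have hEcmul : Ec = Pc * (F.map (Complex.ofReal ·)) := mapC_mul P F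
    have he : star v ⬝ᵥ Ec *ᵥ v = z * (pr : ℂ) := by
      rw [hEcmul, ← Matrix.mulVec_mulVec, heig, Matrix.mulVec_smul, dotProduct_smul,
        smul_eq_mul, hp]
    have he2 : star v ⬝ᵥ Ecᵀ *ᵥ v = starRingEnd ℂ z * (pr : ℂ) := by
      rw [hEcdef, transpose_quad, ← hEcdef, he]
      simp [_root_.map_mul, Complex.conj_ofReal]
    -- expand the smul vectors
    have T1 : star w1 ⬝ᵥ Pc *ᵥ w1 = (‖z‖ : ℂ) * (‖z‖ : ℂ) * (pr : ℂ) := by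
      rw [hw1, star_smul, smul_dotProduct, Matrix.mulVec_smul, dotProduct_smul, hp]
      simp [Complex.conj_ofReal, smul_eq_mul]
      ring
    have T2 : star w2 ⬝ᵥ Pc *ᵥ w2 = z * starRingEnd ℂ z * (pr : ℂ) := by
      rw [hw2, star_smul, smul_dotProduct, Matrix.mulVec_smul, dotProduct_smul, hp]
      simp [smul_eq_mul]
      ring
    have T3 : star w1 ⬝ᵥ Ec *ᵥ w2 = (‖z‖ : ℂ) * starRingEnd ℂ z * (z * (pr : ℂ)) := by
      rw [hw1, hw2, star_smul, smul_dotProduct, Matrix.mulVec_smul, dotProduct_smul, he]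
      simp [Complex.conj_ofReal, smul_eq_mul]
      ring
    have T4 : star w2 ⬝ᵥ Ecᵀ *ᵥ w1 = z * (‖z‖ : ℂ) * (starRingEnd ℂ z * (pr : ℂ)) := by
      rw [hw2, hw1, star_smul, smul_dotProduct, Matrix.mulVec_smul, dotProduct_smul, he2]
      simp [Complex.conj_conj, smul_eq_mul]
      ring
    rw [T1, T2, T3, T4] at hpos
    have hzz : z * starRingEnd ℂ z = ((‖z‖ ^ 2 : ℝ) : ℂ) := by
      rw [Complex.mul_conj]
      norm_cast
      exact (Complex.sq_norm z).symm
    have hczz : starRingEnd ℂ z * z = ((‖z‖ ^ 2 : ℝ) : ℂ) := by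
      rw [mul_comm]; exact hzz
    have hexpr : (R:ℂ) * ((‖z‖ : ℂ) * (‖z‖ : ℂ) * (pr : ℂ))
        + (R:ℂ) * (z * starRingEnd ℂ z * (pr : ℂ))
        - (‖z‖ : ℂ) * starRingEnd ℂ z * (z * (pr : ℂ))
        - z * (‖z‖ : ℂ) * (starRingEnd ℂ z * (pr : ℂ))
        = (((2 * R * ‖z‖ ^ 2 - 2 * ‖z‖ ^ 3) * pr : ℝ) : ℂ) := by
      have h1 : (‖z‖ : ℂ) * starRingEnd ℂ z * (z * (pr : ℂ))
          = (‖z‖ : ℂ) * ((‖z‖ ^ 2 : ℝ) : ℂ) * (pr : ℂ) := by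
        rw [← hczz]; ring
      have h2 : z * (‖z‖ : ℂ) * (starRingEnd ℂ z * (pr : ℂ))
          = (‖z‖ : ℂ) * ((‖z‖ ^ 2 : ℝ) : ℂ) * (pr : ℂ) := by
        rw [← hzz]; ring
      rw [h1, h2, hzz]
      push_cast
      ring
    rw [hexpr] at hpos
    simp only [RCLike.re_to_complex, Complex.ofReal_re] at hpos
    have hfac : 0 < 2 * R * ‖z‖ ^ 2 - 2 * ‖z‖ ^ 3 := by
      by_contra hcon
      push_neg at hcon
      nlinarith [hpos, hre]
    nlinarith [hfac, mul_pos habs habs]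
  · intro hEig
    set B : Matrix (Fin l) (Fin l) ℝ := R⁻¹ • F with hBdef
    have hFB : F = R • B := by
      rw [hBdef, smul_smul, mul_inv_cancel₀ (ne_of_gt hR), one_smul]
    set Bc := B.map (Complex.ofReal ·) with hBc
    have hspec : ∀ z ∈ spectrum ℂ Bc, ‖z‖₊ < 1 := by
      intro z hz
      obtain ⟨v, hv0, hv⟩ := spec_to_eig Bc hz
      have hFc : F.map (Complex.ofReal ·) = (R : ℂ) • Bc := by
        rw [hBc]
        ext i j
        rw [hFB]
        simp [Matrix.map_apply, Complex.ofReal_mul]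
      have heig : (F.map (Complex.ofReal ·)) *ᵥ v = ((R:ℂ) * z) • v := by
        rw [hFc, Matrix.smul_mulVec, hv, smul_smul]
      have habs := hEig ((R:ℂ) * z) ⟨v, hv0, heig⟩
      rw [norm_mul] at habs
      rw [Complex.norm_real, Real.norm_eq_abs, abs_of_pos hR] at habs
      have hlt : ‖z‖ < 1 := by nlinarith [habs]
      have hlt' : ‖z‖ < 1 := by exact hlt
      exact_mod_cast hlt'
    obtain ⟨C, hC, r, hr0, hr1, hbound⟩ := entryBound Bc hspec
    have hBk : ∀ k (i j : Fin l), |(B ^ k) i j| ≤ C * r ^ k := by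
      intro k i j
      have hmk : Bc ^ k = (B ^ k).map (Complex.ofReal ·) := by rw [hBc, mapC_pow]
      have h := hbound k i j
      rw [hmk] at h
      simpa [Matrix.map_apply, Complex.norm_real] using h
    obtain ⟨hsum, P, hPsymm, hPpd, hbil⟩ := lyap B C r hC hr0 hr1 hBk
    refine ⟨P, hPsymm, hPpd, ?_⟩
    rw [Matrix.posDef_iff_dotProduct_mulVec]
    set S : Matrix (Fin 2 × Fin l) (Fin 2 × Fin l) ℝ :=
      -((!![-R, 0; 0, -R]) ⊗ₖ P + (!![0, 1; 0, 0]) ⊗ₖ (P * F) + (!![0, 1; 0, 0])ᵀ ⊗ₖ (P * F)ᵀ)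
      with hSdef
    have hS00 : ∀ a b, S (0,a) (0,b) = R * P a b := by
      intro a b
      simp only [hSdef, Matrix.neg_apply, Matrix.add_apply, Matrix.kroneckerMap_apply,
        Matrix.transpose_apply]
      norm_num [Matrix.cons_val_zero, Matrix.cons_val_one, Matrix.head_cons]
    have hS01 : ∀ a b, S (0,a) (1,b) = -((P * F) a b) := by
      intro a b
      simp only [hSdef, Matrix.neg_apply, Matrix.add_apply, Matrix.kroneckerMap_apply,
        Matrix.transpose_apply]
      norm_num [Matrix.cons_val_zero, Matrix.cons_val_one, Matrix.head_cons]
    have hS10 : ∀ a b, S (1,a) (0,b) = -((P * F) b a) := by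
      intro a b
      simp only [hSdef, Matrix.neg_apply, Matrix.add_apply, Matrix.kroneckerMap_apply,
        Matrix.transpose_apply]
      norm_num [Matrix.cons_val_zero, Matrix.cons_val_one, Matrix.head_cons]
    have hS11 : ∀ a b, S (1,a) (1,b) = R * P a b := by
      intro a b
      simp only [hSdef, Matrix.neg_apply, Matrix.add_apply, Matrix.kroneckerMap_apply,
        Matrix.transpose_apply]
      norm_num [Matrix.cons_val_zero, Matrix.cons_val_one, Matrix.head_cons]
    have hPs : ∀ a b, P a b = P b a := by
      intro a b
      conv_lhs => rw [← hPsymm]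
      rfl
    constructor
    · -- Hermitian
      ext ⟨i,a⟩ ⟨j,b⟩
      simp only [Matrix.conjTranspose_apply, star_trivial]
      fin_cases i <;> fin_cases j
      · show S (0,b) (0,a) = S (0,a) (0,b)
        rw [hS00, hS00, hPs]
      · show S (1,b) (0,a) = S (0,a) (1,b)
        rw [hS10, hS01]
      · show S (0,b) (1,a) = S (1,a) (0,b)
        rw [hS01, hS10]
      · show S (1,b) (1,a) = S (1,a) (1,b)
        rw [hS11, hS11, hPs]
    · intro x hx
      set x1 : Fin l → ℝ := fun a => x (0,a) with hx1
      set x2 : Fin l → ℝ := fun a => x (1,a) with hx2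
      have hxu : (fun p : Fin 2 × Fin l => if p.1 = 0 then x1 p.2 else x2 p.2) = x := by
        funext p
        rcases p with ⟨i,a⟩
        fin_cases i <;> simp [hx1, hx2]
      have hquad := blockQuad P (P * F) R S hS00 hS01 hS10 hS11 x1 x2
      rw [hxu] at hquad
      simp only [star_trivial] at hquad
      have htrans : x2 ⬝ᵥ (P * F)ᵀ *ᵥ x1 = x1 ⬝ᵥ (P * F) *ᵥ x2 := by
        rw [Matrix.mulVec_transpose, dotProduct_comm, ← Matrix.dotProduct_mulVec]
      set w : Fin l → ℝ := B *ᵥ x2 with hw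
      have hcross : x1 ⬝ᵥ (P * F) *ᵥ x2 = R * (x1 ⬝ᵥ P *ᵥ w) := by
        rw [← Matrix.mulVec_mulVec]
        conv_lhs => rw [hFB]
        rw [Matrix.smul_mulVec, Matrix.mulVec_smul, dotProduct_smul, smul_eq_mul, hw]
      have hsymb : ∀ (y yy : Fin l → ℝ), y ⬝ᵥ P *ᵥ yy = yy ⬝ᵥ P *ᵥ y := by
        intro y yy
        rw [hbil, hbil]
        exact tsum_congr fun k => dotProduct_comm _ _
      have hexp : (x1 - w) ⬝ᵥ P *ᵥ (x1 - w)
          = x1 ⬝ᵥ P *ᵥ x1 - 2 * (x1 ⬝ᵥ P *ᵥ w) + w ⬝ᵥ P *ᵥ w := by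
        rw [Matrix.mulVec_sub, sub_dotProduct, dotProduct_sub, dotProduct_sub]
        rw [hsymb w x1]
        ring
      have hshift : w ⬝ᵥ P *ᵥ w = x2 ⬝ᵥ P *ᵥ x2 - x2 ⬝ᵥ x2 := by
        rw [hbil, hbil, hw]
        have hterm : (fun k => (B ^ k *ᵥ (B *ᵥ x2)) ⬝ᵥ (B ^ k *ᵥ (B *ᵥ x2)))
            = fun k => (B ^ (k+1) *ᵥ x2) ⬝ᵥ (B ^ (k+1) *ᵥ x2) := by
          funext k
          rw [Matrix.mulVec_mulVec, ← pow_succ]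
        rw [hterm]
        have h0 := Summable.tsum_eq_zero_add (hsum x2 x2)
        have hz0 : (B ^ 0 *ᵥ x2) ⬝ᵥ (B ^ 0 *ᵥ x2) = x2 ⬝ᵥ x2 := by
          rw [pow_zero, Matrix.one_mulVec]
        rw [h0, hz0]
        ring
      have hfinal : x ⬝ᵥ S *ᵥ x = R * ((x1 - w) ⬝ᵥ P *ᵥ (x1 - w) + x2 ⬝ᵥ x2) := by
        rw [hquad, htrans, hcross, hexp, hshift]
        ring
      simp only [star_trivial]
      rw [hfinal]
      have hnn : 0 ≤ (x1 - w) ⬝ᵥ P *ᵥ (x1 - w) := by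
        rw [hbil]
        exact tsum_nonneg fun k => realdot_nonneg _
      by_cases h2 : x2 = 0
      · have h1 : x1 ≠ 0 := by
          intro h1
          apply hx
          funext p
          rcases p with ⟨i,a⟩
          fin_cases i
          · exact congrFun h1 a
          · exact congrFun h2 a
        have hw0 : w = 0 := by rw [hw, h2, Matrix.mulVec_zero]
        have hle : x1 ⬝ᵥ x1 ≤ (x1 - w) ⬝ᵥ P *ᵥ (x1 - w) := by
          rw [hw0, sub_zero, hbil]
          have := Summable.le_tsum (hsum x1 x1) 0 (fun k _ => realdot_nonneg _)
          simpa using this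
        have hp1 := realdot_pos h1
        have hx2z : x2 ⬝ᵥ x2 = 0 := by rw [h2]; simp
        nlinarith
      · have hp2 := realdot_pos h2
        nlinarith [hnn]
end
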